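/- arXiv:1807.10683 — 4 statements merged into one kernel-verified Lean document; each statement's English description precedes it below -/
import Mathlib

section
/- A strongly primary monoid H is globally tame if and only if ⋂_{u ∈ A(H)} uH ≠ ∅, where A(H) is the set of atoms of H. -/
open Pointwise

section MonoidDefs

variable {G : Type*} [CommGroup G]

/-- `x` is a unit of the submonoid `H`. -/
def IsHUnit (H : Submonoid G) (x : G) : Prop := x ∈ H ∧ x⁻¹ ∈ H

/-- The set of non-units of `H`. -/
def nonUnits (H : Submonoid G) : Set G := {x | x ∈ H ∧ x⁻¹ ∉ H}

/-- `u` is an atom (irreducible element) of `H`. -/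
def IsHAtom (H : Submonoid G) (u : G) : Prop :=
  u ∈ H ∧ ¬ IsHUnit H u ∧
    ∀ a b : G, a ∈ H → b ∈ H → u = a * b → IsHUnit H a ∨ IsHUnit H b

/-- `G` is the quotient group of `H`. -/
def IsQuotientGroup (H : Submonoid G) : Prop :=
  ∀ g : G, ∃ a ∈ H, ∃ b ∈ H, g = a / b

/-- `H` is a primary monoid. -/
def IsPrimaryMonoid (H : Submonoid G) : Prop :=
  (nonUnits H).Nonempty ∧
    ∀ a ∈ nonUnits H, ∀ b ∈ nonUnits H, ∃ n : ℕ, 0 < n ∧ b ^ n ∈ a • (H : Set G)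

/-- `H` is a strongly primary monoid. -/
def IsStronglyPrimary (H : Submonoid G) : Prop :=
  (nonUnits H).Nonempty ∧
    ∀ a ∈ nonUnits H, ∃ n : ℕ, 0 < n ∧ nonUnits H ^ n ⊆ a • (H : Set G)

/-- `x` and `y` are associated in `H`. -/
def HAssoc (H : Submonoid G) (x y : G) : Prop := IsHUnit H (x / y)

/-- The set of lengths of `a`: all `k` such that `a` is a product of `k` atoms
(up to a unit of `H`). -/
def lengthSet (H : Submonoid G) (a : G) : Set ℕ :=
  {k | ∃ s : Multiset G, Multiset.card s = k ∧ (∀ v ∈ s, IsHAtom H v) ∧ HAssoc H a s.prod}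

/-- `Λ(S)`, the supremum of the minimal factorization lengths of elements of `S`. -/
noncomputable def Lambda (H : Submonoid G) (S : Set G) : ℕ∞ :=
  ⨆ (a : G) (_ : a ∈ S) (_ : (lengthSet H a).Nonempty), ((sInf (lengthSet H a) : ℕ) : ℕ∞)

/-- `ρ_k(H)`, the supremum of `sup L(a)` over all `a` with `k ∈ L(a)`. -/
noncomputable def rho (H : Submonoid G) (k : ℕ∞) : ℕ∞ :=
  ⨆ (a : G) (_ : a ∈ H) (_ : ∃ n ∈ lengthSet H a, (n : ℕ∞) = k),
    ⨆ (n : ℕ) (_ : n ∈ lengthSet H a), (n : ℕ∞)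

/-- The elasticity `ρ(H) = sup { m/n : m, n ∈ L(a), a ∈ H }`. -/
noncomputable def elasticity (H : Submonoid G) : ENNReal :=
  ⨆ (a : G) (_ : a ∈ H) (m : ℕ) (_ : m ∈ lengthSet H a) (n : ℕ) (_ : n ∈ lengthSet H a),
    (m : ENNReal) / (n : ENNReal)

/-- `z` is a factorization of `a`: a multiset of atoms whose product is associated to `a`. -/
def IsFactorization (H : Submonoid G) (a : G) (z : Multiset G) : Prop :=
  (∀ v ∈ z, IsHAtom H v) ∧ HAssoc H a z.prod

/-- The distance between two factorizations: cancel a (maximal) common part (up to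
associates) and take the maximum of the lengths of the remaining parts. -/
noncomputable def fdist (H : Submonoid G) (z z' : Multiset G) : ℕ :=
  sInf {N : ℕ | ∃ x x' v w : Multiset G, z = x + v ∧ z' = x' + w ∧
    Multiset.Rel (HAssoc H) x x' ∧ max (Multiset.card v) (Multiset.card w) ≤ N}

/-- `N` is a tame bound for the atom `u`: for every multiple `a` of `u` and every
factorization `z` of `a` there is a factorization `z'` of `a` containing `u`
with `d(z, z') ≤ N`. -/
def TameBound (H : Submonoid G) (u : G) (N : ℕ) : Prop :=
  ∀ a ∈ H, (∃ b ∈ H, a = u * b) → ∀ z : Multiset G, IsFactorization H a z →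
    ∃ z' : Multiset G, IsFactorization H a z' ∧ (∃ v ∈ z', HAssoc H v u) ∧ fdist H z z' ≤ N

/-- `H` is locally tame: `t(u) < ∞` for every atom `u`. -/
def LocallyTame (H : Submonoid G) : Prop :=
  ∀ u : G, IsHAtom H u → ∃ N : ℕ, TameBound H u N

/-- `H` is globally tame: `sup { t(u) : u an atom } < ∞`. -/
def GloballyTame (H : Submonoid G) : Prop :=
  ∃ N : ℕ, ∀ u : G, IsHAtom H u → TameBound H u N

/-- The local tame degree `t(u)` of `u`. -/
noncomputable def tameDeg (H : Submonoid G) (u : G) : ℕ∞ :=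
  sInf {N : ℕ∞ | ∃ n : ℕ, TameBound H u n ∧ N = (n : ℕ∞)}

/-- `N` is an omega bound for `a`: whenever `a` divides a product of elements of `H`,
it divides a subproduct with at most `N` factors. -/
def OmegaBound (H : Submonoid G) (a : G) (N : ℕ) : Prop :=
  ∀ s : Multiset G, (∀ x ∈ s, x ∈ H) → (∃ c ∈ H, s.prod = a * c) →
    ∃ t : Multiset G, t ≤ s ∧ Multiset.card t ≤ N ∧ ∃ c ∈ H, t.prod = a * c

/-- The omega invariant `ω(a)`. -/
noncomputable def omegaDeg (H : Submonoid G) (a : G) : ℕ∞ :=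
  sInf {N : ℕ∞ | ∃ n : ℕ, OmegaBound H a n ∧ N = (n : ℕ∞)}

/-- `M(x)`: the smallest `n ≥ 1` with `mⁿ ⊆ xH`. -/
noncomputable def Mdeg (H : Submonoid G) (x : G) : ℕ :=
  sInf {n : ℕ | 0 < n ∧ nonUnits H ^ n ⊆ x • (H : Set G)}

/-- The complete integral closure `Ĥ` of `H` (inside the quotient group). -/
def hatH (H : Submonoid G) : Set G := {x | ∃ c ∈ H, ∀ n : ℕ, c * x ^ n ∈ H}

/-- The set of non-units of `Ĥ`. -/
def hatNonUnits (H : Submonoid G) : Set G := {x | x ∈ hatH H ∧ x⁻¹ ∉ hatH H}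

/-- The root closure `H̃` of `H`. -/
def tildeH (H : Submonoid G) : Set G := {x | ∃ n : ℕ, 0 < n ∧ x ^ n ∈ H}

/-- The set of non-units of `H̃`. -/
def tildeNonUnits (H : Submonoid G) : Set G := {x | x ∈ tildeH H ∧ x⁻¹ ∉ tildeH H}

/-- The seminormal closure `H'` of `H`. -/
def seminormalClosure (H : Submonoid G) : Set G :=
  {x | ∃ N : ℕ, ∀ n : ℕ, N ≤ n → x ^ n ∈ H}

/-- The conductor `(H : Ĥ)`. -/
def conductorH (H : Submonoid G) : Set G := {z | ∀ x ∈ hatH H, z * x ∈ H}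

/-- `Ĥ` is a primary monoid. -/
def HatPrimary (H : Submonoid G) : Prop :=
  (hatNonUnits H).Nonempty ∧
    ∀ a ∈ hatNonUnits H, ∀ b ∈ hatNonUnits H,
      ∃ n : ℕ, 0 < n ∧ ∃ c ∈ hatH H, b ^ n = a * c

/-- `Ĥ` is a valuation monoid. -/
def HatValuation (H : Submonoid G) : Prop :=
  ∀ a ∈ hatH H, ∀ b ∈ hatH H,
    (∃ c ∈ hatH H, b = a * c) ∨ (∃ c ∈ hatH H, a = b * c)

/-- `H` is atomic. -/
def Atomic (H : Submonoid G) : Prop :=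
  ∀ a ∈ nonUnits H, ∃ s : Multiset G, (∀ v ∈ s, IsHAtom H v) ∧ a = s.prod

/-- `H` is a discrete valuation monoid, i.e. `H_red ≅ (ℕ₀, +)`. -/
def IsDiscreteValuationMonoid (H : Submonoid G) : Prop :=
  ∃ p ∈ H, ¬ IsHUnit H p ∧ ∀ a ∈ H, ∃ n : ℕ, ∃ ε : G, IsHUnit H ε ∧ a = ε * p ^ n

end MonoidDefs

section SPAuxSec
set_option linter.unusedSectionVars false

namespace SPAux

variable {G : Type*} [CommGroup G] {H : Submonoid G}

lemma isHUnit_one : IsHUnit H (1 : G) := ⟨H.one_mem, by simpa using H.one_mem⟩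

lemma IsHUnit.mul {x y : G} (hx : IsHUnit H x) (hy : IsHUnit H y) : IsHUnit H (x * y) :=
  ⟨H.mul_mem hx.1 hy.1, by rw [mul_inv]; exact H.mul_mem hx.2 hy.2⟩

lemma hassoc_refl (a : G) : HAssoc H a a := by
  unfold HAssoc; rw [div_self']; exact isHUnit_one

lemma rel_refl (x : Multiset G) : Multiset.Rel (HAssoc H) x x := by
  induction x using Multiset.induction with
  | empty => exact Multiset.Rel.zero
  | cons a s ih => exact Multiset.Rel.cons (hassoc_refl a) ih

lemma not_unit_of_nonUnit {x : G} (hx : x ∈ nonUnits H) : ¬ IsHUnit H x :=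
  fun h => hx.2 h.2

lemma nonUnit_of_not_unit {x : G} (hx : x ∈ H) (h : ¬ IsHUnit H x) : x ∈ nonUnits H :=
  ⟨hx, fun hinv => h ⟨hx, hinv⟩⟩

lemma atom_nonUnit {u : G} (hu : IsHAtom H u) : u ∈ nonUnits H :=
  nonUnit_of_not_unit hu.1 hu.2.1

lemma nonUnits_mul_mem {x y : G} (hx : x ∈ nonUnits H) (hy : y ∈ H) :
    x * y ∈ nonUnits H := by
  refine ⟨H.mul_mem hx.1 hy, fun hinv => hx.2 ?_⟩
  have h : x⁻¹ = y * (x * y)⁻¹ := by group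
  rw [h]; exact H.mul_mem hy hinv

lemma mul_nonUnits_subset : nonUnits H * nonUnits H ⊆ nonUnits H := by
  rintro z ⟨x, hx, y, hy, rfl⟩
  exact nonUnits_mul_mem hx hy.1

lemma pow_succ_mul_subset (n : ℕ) :
    nonUnits H ^ (n + 1) * nonUnits H ⊆ nonUnits H ^ (n + 1) := by
  rw [pow_succ, mul_assoc]
  exact Set.mul_subset_mul_left mul_nonUnits_subset

lemma pow_succ_subset {n : ℕ} (hn : 1 ≤ n) :
    nonUnits H ^ (n + 1) ⊆ nonUnits H ^ n := by
  obtain ⟨k, rfl⟩ : ∃ k, n = k + 1 := ⟨n - 1, by omega⟩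
  rw [pow_succ]
  exact pow_succ_mul_subset k

lemma pow_antitone {j k : ℕ} (hj : 1 ≤ j) (hjk : j ≤ k) :
    nonUnits H ^ k ⊆ nonUnits H ^ j := by
  induction k with
  | zero => omega
  | succ k ih =>
    rcases eq_or_lt_of_le hjk with rfl | hlt
    · exact subset_rfl
    · have hk : j ≤ k := by omega
      exact (pow_succ_subset (by omega)).trans (ih hk)

lemma prod_mem_pow {s : Multiset G} (hs : ∀ x ∈ s, x ∈ nonUnits H) :
    s.prod ∈ nonUnits H ^ Multiset.card s := by
  induction s using Multiset.induction with
  | empty => simp [Set.mem_one]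
  | cons a s ih =>
    simp only [Multiset.prod_cons, Multiset.card_cons]
    rw [pow_succ']
    exact Set.mul_mem_mul (hs a (Multiset.mem_cons_self _ _))
      (ih fun x hx => hs x (Multiset.mem_cons_of_mem hx))

lemma pow_subset_smul_mul {n1 n2 : ℕ} {x y : G} (h1 : nonUnits H ^ n1 ⊆ x • (H : Set G))
    (h2 : nonUnits H ^ n2 ⊆ y • (H : Set G)) :
    nonUnits H ^ (n1 + n2) ⊆ (x * y) • (H : Set G) := by
  rw [pow_add]
  rintro z ⟨p, hp, q, hq, rfl⟩
  obtain ⟨a, ha, rfl⟩ := h1 hp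
  obtain ⟨b, hb, rfl⟩ := h2 hq
  exact Set.mem_smul_set.mpr ⟨a * b, H.mul_mem ha hb,
    by simp only [smul_eq_mul]; exact mul_mul_mul_comm x y a b⟩

lemma prod_smul_subset {M0 : ℕ} {s : Multiset G}
    (hs : ∀ x ∈ s, nonUnits H ^ M0 ⊆ x • (H : Set G)) (hne : s ≠ 0) :
    nonUnits H ^ (Multiset.card s * M0) ⊆ s.prod • (H : Set G) := by
  induction s using Multiset.induction with
  | empty => exact absurd rfl hne
  | cons a s ih =>
    rcases eq_or_ne s 0 with rfl | hs0
    · simpa using hs a (Multiset.mem_cons_self _ _)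
    · have h2 := pow_subset_smul_mul (hs a (Multiset.mem_cons_self _ _))
        (ih (fun x hx => hs x (Multiset.mem_cons_of_mem hx)) hs0)
      simp only [Multiset.card_cons, Multiset.prod_cons]
      have he : (Multiset.card s + 1) * M0 = M0 + Multiset.card s * M0 := by ring
      rw [he]; exact h2

lemma card_le_of_prod {n : ℕ} {a : G} (hsub : nonUnits H ^ n ⊆ a • (H : Set G))
    {s : Multiset G} (hs : ∀ x ∈ s, x ∈ nonUnits H) (hprod : a = s.prod) :
    Multiset.card s ≤ n := by
  by_contra hlt
  push_neg at hlt
  have h1 : s.prod ∈ nonUnits H ^ Multiset.card s := prod_mem_pow hs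
  have h2 : s.prod ∈ nonUnits H ^ (n + 1) := pow_antitone (by omega) (by omega) h1
  rw [pow_succ] at h2
  obtain ⟨p, hp, q, hq, hpq⟩ := h2
  obtain ⟨h', hh', hph⟩ := hsub hp
  simp only [smul_eq_mul] at hph hpq
  apply hq.2
  have key : a = a * (h' * q) := by
    rw [← mul_assoc, hph, hpq, hprod]
  have h1' : (1 : G) = h' * q := mul_left_cancel (a := a) (by rw [← key, mul_one])
  have h2' : h' = q⁻¹ := eq_inv_of_mul_eq_one_left h1'.symm
  rw [← h2']; exact hh'

end SPAux

namespace SPAux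

variable {G : Type*} [CommGroup G] {H : Submonoid G}

lemma atomic (hsp : IsStronglyPrimary H) {a : G} (ha : a ∈ nonUnits H) :
    ∃ s : Multiset G, (∀ v ∈ s, IsHAtom H v) ∧ a = s.prod := by
  classical
  obtain ⟨n, hn, hsub⟩ := hsp.2 a ha
  set S : Set ℕ := {k | ∃ s : Multiset G, Multiset.card s = k ∧
    (∀ x ∈ s, x ∈ nonUnits H) ∧ a = s.prod} with hS
  have hSne : S.Nonempty := ⟨1, {a}, by simp, by simpa using ha, by simp⟩
  have hSbdd : BddAbove S := by
    refine ⟨n, fun k hk => ?_⟩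
    obtain ⟨s, hcard, hmem, hprod⟩ := hk
    exact hcard ▸ card_le_of_prod hsub hmem hprod
  obtain ⟨s, hcard, hmem, hprod⟩ := Nat.sSup_mem hSne hSbdd
  refine ⟨s, fun v hv => ?_, hprod⟩
  have hvm := hmem v hv
  refine ⟨hvm.1, not_unit_of_nonUnit hvm, fun p q hp hq hpq => ?_⟩
  by_contra hcon
  push_neg at hcon
  obtain ⟨hnp, hnq⟩ := hcon
  have hp' : p ∈ nonUnits H := nonUnit_of_not_unit hp hnp
  have hq' : q ∈ nonUnits H := nonUnit_of_not_unit hq hnq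
  have hin : Multiset.card s + 1 ∈ S := by
    refine ⟨p ::ₘ q ::ₘ s.erase v, ?_, ?_, ?_⟩
    · have hpos : 0 < Multiset.card s := Multiset.card_pos_iff_exists_mem.mpr ⟨v, hv⟩
      simp only [Multiset.card_cons, Multiset.card_erase_of_mem hv, Nat.pred_eq_sub_one]
      omega
    · intro x hx
      rcases Multiset.mem_cons.mp hx with rfl | hx
      · exact hp'
      rcases Multiset.mem_cons.mp hx with rfl | hx
      · exact hq'
      · exact hmem x (Multiset.mem_of_mem_erase hx)
    · rw [Multiset.prod_cons, Multiset.prod_cons, ← mul_assoc, ← hpq,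
        ← Multiset.prod_cons, Multiset.cons_erase hv, hprod]
  have hle := le_csSup hSbdd hin
  rw [← hcard] at hle
  omega

lemma rel_prod {x x' : Multiset G} (h : Multiset.Rel (HAssoc H) x x') :
    IsHUnit H (x.prod / x'.prod) := by
  induction h with
  | zero => simpa using (isHUnit_one : IsHUnit H 1)
  | @cons a b as bs hab _ ih =>
    simp only [Multiset.prod_cons]
    have he : (a * as.prod) / (b * bs.prod) = (a / b) * (as.prod / bs.prod) :=
      (div_mul_div_comm a b as.prod bs.prod).symm
    rw [he]
    exact IsHUnit.mul hab ih

lemma rel_exists_mem {x x' : Multiset G} (h : Multiset.Rel (HAssoc H) x x')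
    {u : G} (hu : u ∈ x') : ∃ v ∈ x, HAssoc H v u := by
  obtain ⟨v, hv, hr⟩ := Multiset.exists_mem_of_rel_of_mem (Multiset.rel_flip.mpr h) hu
  exact ⟨v, hv, hr⟩

lemma exists_le_card {z : Multiset G} {n : ℕ} (h : n ≤ Multiset.card z) :
    ∃ s, s ≤ z ∧ Multiset.card s = n := by
  induction z using Multiset.induction generalizing n with
  | empty =>
    refine ⟨0, le_refl _, ?_⟩
    simp at h ⊢; omega
  | cons a z ih =>
    rcases Nat.eq_zero_or_pos n with rfl | hn
    · exact ⟨0, Multiset.zero_le _, rfl⟩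
    · obtain ⟨k, rfl⟩ : ∃ k, n = k + 1 := ⟨n - 1, by omega⟩
      simp only [Multiset.card_cons] at h
      obtain ⟨s, hs, hcard⟩ := ih (n := k) (by omega)
      exact ⟨a ::ₘ s, Multiset.cons_le_cons a hs, by simp [hcard]⟩

end SPAux

namespace SPAux

variable {G : Type*} [CommGroup G] {H : Submonoid G}

lemma pow_card_mem {b0 : G} {v : Multiset G}
    (hv : ∀ x ∈ v, b0 ∈ x • (H : Set G)) :
    ∃ h ∈ H, b0 ^ Multiset.card v = v.prod * h := by
  induction v using Multiset.induction with
  | empty => exact ⟨1, H.one_mem, by simp⟩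
  | cons a s ih =>
    obtain ⟨h, hh, heq⟩ := ih (fun x hx => hv x (Multiset.mem_cons_of_mem hx))
    obtain ⟨e, he, hee⟩ := hv a (Multiset.mem_cons_self _ _)
    simp only [smul_eq_mul] at hee
    refine ⟨e * h, H.mul_mem he hh, ?_⟩
    simp only [Multiset.card_cons, Multiset.prod_cons, pow_succ]
    rw [heq, ← hee]
    ac_rfl

lemma forward (hsp : IsStronglyPrimary H) (hGT : GloballyTame H) :
    (⋂ (u : G) (_ : IsHAtom H u), u • (H : Set G)).Nonempty := by
  classical
  obtain ⟨N, hN⟩ := hGT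
  obtain ⟨b0, hb0⟩ := hsp.1
  obtain ⟨s0, hs0atoms, hs0prod⟩ := atomic hsp hb0
  have hdvd : ∀ vi ∈ s0, b0 ∈ vi • (H : Set G) := by
    intro vi hvi
    refine Set.mem_smul_set.mpr ⟨(s0.erase vi).prod,
      multiset_prod_mem _ (fun x hx => (hs0atoms x (Multiset.mem_of_mem_erase hx)).1), ?_⟩
    rw [smul_eq_mul, ← Multiset.prod_cons, Multiset.cons_erase hvi, ← hs0prod]
  refine ⟨b0 ^ (N + 1), Set.mem_iInter₂.mpr fun u hu => ?_⟩
  obtain ⟨Mu, hMupos, hMusub⟩ := hsp.2 u (atom_nonUnit hu)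
  set a := b0 ^ Mu with ha
  have hbu : a ∈ u • (H : Set G) := hMusub (Set.pow_mem_pow hb0 (n := Mu))
  obtain ⟨b, hbH, hbeq⟩ := hbu
  simp only [smul_eq_mul] at hbeq
  have haH : a ∈ H := pow_mem hb0.1 _
  set z : Multiset G := Mu • s0 with hz
  have hzmem : ∀ v ∈ z, v ∈ s0 := fun v hv => (Multiset.mem_nsmul.mp hv).2
  have hzprod : z.prod = a := by rw [hz, Multiset.prod_nsmul, ← hs0prod]
  have hzfact : IsFactorization H a z :=
    ⟨fun v hv => hs0atoms v (hzmem v hv), by rw [hzprod]; exact hassoc_refl a⟩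
  obtain ⟨z', hz'fact, ⟨u', hu'z, hu'u⟩, hdist⟩ :=
    hN u hu a haH ⟨b, hbH, hbeq.symm⟩ z hzfact
  have hSne : {N' : ℕ | ∃ x x' v w : Multiset G, z = x + v ∧ z' = x' + w ∧
      Multiset.Rel (HAssoc H) x x' ∧ max (Multiset.card v) (Multiset.card w) ≤ N'}.Nonempty :=
    ⟨max (Multiset.card z) (Multiset.card z'), 0, 0, z, z', (zero_add z).symm, (zero_add z').symm,
      Multiset.Rel.zero, le_refl _⟩
  obtain ⟨x, x', v, w, hzx, hz'x, hrel, hcards⟩ := Nat.sInf_mem hSne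
  have hcards' : max (Multiset.card v) (Multiset.card w) ≤ N := hcards.trans hdist
  rcases Multiset.mem_add.mp (by rw [← hz'x]; exact hu'z) with hx' | hw
  · -- u' is associated to an atom v0 of z, hence of s0, so u divides b0
    obtain ⟨v0, hv0x, hv0u'⟩ := rel_exists_mem hrel hx'
    have hv0s0 : v0 ∈ s0 := hzmem v0 (by rw [hzx]; exact Multiset.mem_add.mpr (Or.inl hv0x))
    have hvu : IsHUnit H (v0 / u) := by
      have h := IsHUnit.mul hv0u' hu'u
      rwa [div_mul_div_cancel] at h
    obtain ⟨e, heH, hee⟩ := hdvd v0 hv0s0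
    simp only [smul_eq_mul] at hee
    refine Set.mem_smul_set.mpr ⟨v0 / u * e * b0 ^ N,
      H.mul_mem (H.mul_mem hvu.1 heH) (pow_mem hb0.1 N), ?_⟩
    simp only [smul_eq_mul]
    calc u * (v0 / u * e * b0 ^ N) = u * (v0 / u) * e * b0 ^ N := by
          rw [mul_assoc, mul_assoc, mul_assoc]
      _ = v0 * e * b0 ^ N := by rw [mul_div_cancel]
      _ = b0 * b0 ^ N := by rw [hee]
      _ = b0 ^ (N + 1) := by rw [← pow_succ']
  · -- u' occurs in w, so u divides v.prod, a product of at most N atoms dividing b0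
    set R := (w.erase u').prod with hRdef
    have hRH : R ∈ H :=
      multiset_prod_mem _ (fun y hy => (hz'fact.1 y (by
        rw [hz'x]; exact Multiset.mem_add.mpr (Or.inr (Multiset.mem_of_mem_erase hy)))).1)
    have hWeq : w.prod = u' * R := by
      rw [hRdef, ← Multiset.prod_cons, Multiset.cons_erase hw]
    have hδ : IsHUnit H (x.prod / x'.prod) := rel_prod hrel
    have hε : IsHUnit H (a / z'.prod) := hz'fact.2
    have hη : IsHUnit H (u' / u) := hu'u
    have hδx : x.prod = x.prod / x'.prod * x'.prod := (div_eq_iff_eq_mul.mp rfl)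
    have hεa : a = a / z'.prod * z'.prod := (div_eq_iff_eq_mul.mp rfl)
    have hηu : u' = u' / u * u := (div_eq_iff_eq_mul.mp rfl)
    have hXV : x.prod * v.prod = a := by rw [← Multiset.prod_add, ← hzx, hzprod]
    have hX'W : x'.prod * w.prod = z'.prod := by rw [← Multiset.prod_add, ← hz'x]
    have hcancel : x.prod / x'.prod * v.prod = a / z'.prod * w.prod := by
      apply mul_left_cancel (a := x'.prod)
      calc x'.prod * (x.prod / x'.prod * v.prod)
          = (x.prod / x'.prod * x'.prod) * v.prod := by ac_rfl
        _ = x.prod * v.prod := by rw [← hδx]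
        _ = a := hXV
        _ = a / z'.prod * z'.prod := hεa
        _ = a / z'.prod * (x'.prod * w.prod) := by rw [hX'W]
        _ = x'.prod * (a / z'.prod * w.prod) := by ac_rfl
    have hV : v.prod = (x.prod / x'.prod)⁻¹ * (a / z'.prod * w.prod) := by
      rw [← hcancel, ← mul_assoc, inv_mul_cancel, one_mul]
    obtain ⟨h1, hh1, hpow⟩ := pow_card_mem (b0 := b0) (v := v)
      (fun y hy => hdvd y (hzmem y (by rw [hzx]; exact Multiset.mem_add.mpr (Or.inr hy))))
    have hcv : Multiset.card v ≤ N := le_trans (le_max_left _ _) hcards'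
    refine Set.mem_smul_set.mpr
      ⟨(x.prod / x'.prod)⁻¹ * (a / z'.prod) * (u' / u) * R * h1 * b0 ^ (N + 1 - Multiset.card v),
        H.mul_mem (H.mul_mem (H.mul_mem (H.mul_mem (H.mul_mem hδ.2 hε.1) hη.1) hRH) hh1)
          (pow_mem hb0.1 _), ?_⟩
    simp only [smul_eq_mul]
    calc u * ((x.prod / x'.prod)⁻¹ * (a / z'.prod) * (u' / u) * R * h1 *
            b0 ^ (N + 1 - Multiset.card v))
        = (x.prod / x'.prod)⁻¹ * (a / z'.prod * (u' / u * u * R)) *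
            (h1 * b0 ^ (N + 1 - Multiset.card v)) := by ac_rfl
      _ = (x.prod / x'.prod)⁻¹ * (a / z'.prod * (u' * R)) *
            (h1 * b0 ^ (N + 1 - Multiset.card v)) := by rw [← hηu]
      _ = (x.prod / x'.prod)⁻¹ * (a / z'.prod * w.prod) *
            (h1 * b0 ^ (N + 1 - Multiset.card v)) := by rw [← hWeq]
      _ = v.prod * (h1 * b0 ^ (N + 1 - Multiset.card v)) := by rw [← hV]
      _ = (v.prod * h1) * b0 ^ (N + 1 - Multiset.card v) := by rw [mul_assoc]
      _ = b0 ^ Multiset.card v * b0 ^ (N + 1 - Multiset.card v) := by rw [← hpow]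
      _ = b0 ^ (N + 1) := by rw [← pow_add]; congr 1; omega

end SPAux

namespace SPAux

variable {G : Type*} [CommGroup G] {H : Submonoid G}

lemma backward (hsp : IsStronglyPrimary H)
    (hc : (⋂ (u : G) (_ : IsHAtom H u), u • (H : Set G)).Nonempty) :
    GloballyTame H := by
  classical
  by_cases hA : ∃ u : G, IsHAtom H u
  swap
  · exact ⟨0, fun u hu => absurd ⟨u, hu⟩ hA⟩
  obtain ⟨u0, hu0⟩ := hA
  obtain ⟨c0, hc0i⟩ := hc
  have hc0mem : ∀ u : G, IsHAtom H u → c0 ∈ u • (H : Set G) := fun u hu =>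
    Set.mem_iInter₂.mp hc0i u hu
  have hc0non : c0 ∈ nonUnits H := by
    obtain ⟨h, hh, heq⟩ := hc0mem u0 hu0
    simp only [smul_eq_mul] at heq
    refine ⟨by rw [← heq]; exact H.mul_mem hu0.1 hh, fun hinv => hu0.2.1 ⟨hu0.1, ?_⟩⟩
    have he : u0⁻¹ = h * c0⁻¹ := by rw [← heq]; group
    rw [he]; exact H.mul_mem hh hinv
  obtain ⟨M0, hM0pos, hM0⟩ := hsp.2 c0 hc0non
  have hM0u : ∀ u : G, IsHAtom H u → nonUnits H ^ M0 ⊆ u • (H : Set G) := by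
    intro u hu p hp
    obtain ⟨h, hh, heq⟩ := hM0 hp
    obtain ⟨h0, hh0, heq0⟩ := hc0mem u hu
    simp only [smul_eq_mul] at heq heq0
    exact Set.mem_smul_set.mpr ⟨h0 * h, H.mul_mem hh0 hh,
      by rw [smul_eq_mul, ← mul_assoc, heq0, heq]⟩
  have hM0sq : M0 ≤ M0 * M0 := Nat.le_mul_of_pos_left M0 hM0pos
  refine ⟨1 + M0 * M0, fun u hu => ?_⟩
  intro a haH hab z hz
  obtain ⟨b, hbH, habe⟩ := hab
  have hε : IsHUnit H (a / z.prod) := hz.2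
  have hzp : u * (b * (a / z.prod)⁻¹) = z.prod := by
    rw [← mul_assoc, ← habe, ← div_eq_mul_inv, div_div_cancel]
  have hziH : b * (a / z.prod)⁻¹ ∈ H := H.mul_mem hbH hε.2
  have hzne : z ≠ 0 := by
    intro h0
    rw [h0] at hzp
    simp only [Multiset.prod_zero] at hzp
    have hinv : u⁻¹ = b * (a / (0 : Multiset G).prod)⁻¹ := inv_eq_of_mul_eq_one_right hzp
    apply hu.2.1
    refine ⟨hu.1, ?_⟩
    rw [h0] at hziH
    simp only [Multiset.prod_zero] at hinv hziH
    rw [hinv]; exact hziH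
  have hchoice : ∃ s rest : Multiset G, z = s + rest ∧ s ≠ 0 ∧ Multiset.card s ≤ M0 ∧
      s.prod ∈ u • (H : Set G) := by
    rcases le_or_gt (Multiset.card z) M0 with hle | hlt
    · exact ⟨z, 0, (add_zero z).symm, hzne, hle,
        Set.mem_smul_set.mpr ⟨b * (a / z.prod)⁻¹, hziH, by rw [smul_eq_mul, hzp]⟩⟩
    · obtain ⟨s, hsle, hscard⟩ := exists_le_card (le_of_lt hlt)
      refine ⟨s, z - s, by rw [add_comm]; exact (tsub_add_cancel_of_le hsle).symm, ?_,
        le_of_eq hscard, ?_⟩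
      · intro h0; rw [h0] at hscard; simp at hscard; omega
      · apply hM0u u hu
        have hp := prod_mem_pow (s := s)
          (fun x hx => atom_nonUnit (hz.1 x (Multiset.mem_of_le hsle hx)))
        rwa [hscard] at hp
  obtain ⟨s, rest, hzsr, hsne, hscard, hsprod⟩ := hchoice
  obtain ⟨c, hcH, hceq⟩ := hsprod
  simp only [smul_eq_mul] at hceq
  have hrestatoms : ∀ y ∈ rest, IsHAtom H y := fun y hy =>
    hz.1 y (by rw [hzsr]; exact Multiset.mem_add.mpr (Or.inr hy))
  have hsatoms : ∀ y ∈ s, IsHAtom H y := fun y hy =>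
    hz.1 y (by rw [hzsr]; exact Multiset.mem_add.mpr (Or.inl hy))
  by_cases hcu : IsHUnit H c
  · -- the complementary divisor is a unit
    have hatom : IsHAtom H (u * c) := by
      refine ⟨H.mul_mem hu.1 hcu.1, fun hunit => hu.2.1 ?_, fun p q hp hq hpq => ?_⟩
      · exact ⟨hu.1, by
          rw [show u⁻¹ = c * (u * c)⁻¹ from by group]; exact H.mul_mem hcu.1 hunit.2⟩
      · rcases hu.2.2 p (q * c⁻¹) hp (H.mul_mem hq hcu.2)
          (by rw [← mul_assoc, ← hpq, mul_inv_cancel_right]) with h | h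
        · exact Or.inl h
        · refine Or.inr ?_
          have h2 := IsHUnit.mul h hcu
          rwa [inv_mul_cancel_right] at h2
    have hprodeq : ((u * c) ::ₘ rest).prod = z.prod := by
      rw [Multiset.prod_cons, hceq, hzsr, Multiset.prod_add]
    refine ⟨(u * c) ::ₘ rest, ⟨?_, ?_⟩, ⟨u * c, Multiset.mem_cons_self _ _, ?_⟩, ?_⟩
    · intro y hy
      rcases Multiset.mem_cons.mp hy with rfl | hy
      exacts [hatom, hrestatoms y hy]
    · show IsHUnit H (a / ((u * c) ::ₘ rest).prod)
      rw [hprodeq]; exact hε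
    · show IsHUnit H (u * c / u)
      rwa [mul_div_cancel_left]
    · apply Nat.sInf_le
      refine ⟨rest, rest, s, {u * c}, by rw [hzsr, add_comm], ?_, rel_refl rest, ?_⟩
      · rw [add_comm, Multiset.singleton_add]
      · rw [max_le_iff]
        constructor
        · omega
        · simp only [Multiset.card_singleton]; omega
  · -- the complementary divisor is a nonunit; factor it
    have hcm : c ∈ nonUnits H := nonUnit_of_not_unit hcH hcu
    obtain ⟨t, htat, htprod⟩ := atomic hsp hcm
    have hsub2 : nonUnits H ^ (Multiset.card s * M0) ⊆ s.prod • (H : Set G) :=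
      prod_smul_subset (fun x hx => hM0u x (hsatoms x hx)) hsne
    have hspos : 1 ≤ Multiset.card s := by
      have := Multiset.card_pos.mpr hsne; omega
    have hsubc : nonUnits H ^ (M0 * M0) ⊆ c • (H : Set G) := by
      intro p hp
      have hp' : p ∈ nonUnits H ^ (Multiset.card s * M0) :=
        pow_antitone (Nat.mul_pos hspos hM0pos) (Nat.mul_le_mul_right M0 hscard) hp
      obtain ⟨h, hh, heq⟩ := hsub2 hp'
      simp only [smul_eq_mul] at heq
      exact Set.mem_smul_set.mpr ⟨u * h, H.mul_mem hu.1 hh,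
        by rw [smul_eq_mul, show c * (u * h) = u * c * h from by ac_rfl, hceq, heq]⟩
    have htcard : Multiset.card t ≤ M0 * M0 :=
      card_le_of_prod hsubc (fun x hx => atom_nonUnit (htat x hx)) htprod
    have hprodeq : (u ::ₘ (t + rest)).prod = z.prod := by
      rw [Multiset.prod_cons, Multiset.prod_add, ← htprod, ← mul_assoc, hceq, hzsr,
        Multiset.prod_add]
    refine ⟨u ::ₘ (t + rest), ⟨?_, ?_⟩, ⟨u, Multiset.mem_cons_self _ _, hassoc_refl u⟩, ?_⟩
    · intro y hy
      rcases Multiset.mem_cons.mp hy with rfl | hy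
      · exact hu
      rcases Multiset.mem_add.mp hy with hy | hy
      exacts [htat y hy, hrestatoms y hy]
    · show IsHUnit H (a / (u ::ₘ (t + rest)).prod)
      rw [hprodeq]; exact hε
    · apply Nat.sInf_le
      refine ⟨rest, rest, s, u ::ₘ t, by rw [hzsr, add_comm], ?_, rel_refl rest, ?_⟩
      · rw [← Multiset.cons_add]; exact add_comm _ _
      · rw [max_le_iff]
        constructor
        · omega
        · simp only [Multiset.card_cons]; omega

end SPAux

end SPAuxSec


/-- A strongly primary monoid `H` is globally tame if and only if
`⋂_{u ∈ A(H)} uH ≠ ∅`. -/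
theorem stmt1 {G : Type*} [CommGroup G] (H : Submonoid G) (hq : IsQuotientGroup H)
    (hsp : IsStronglyPrimary H) :
    GloballyTame H ↔ (⋂ (u : G) (_ : IsHAtom H u), u • (H : Set G)).Nonempty := by
  exact ⟨fun h => SPAux.forward hsp h, fun h => SPAux.backward hsp h⟩
end

section
/- For a strongly primary monoid H: if H is globally tame then the elasticity ρ(H) is finite; if ρ(H) < ∞ then ρ_k(H) < ∞ for every k ∈ ℕ; and if ρ_k(H) < ∞ for every k ∈ ℕ then Λ(H) = ∞. -/
open Pointwise

section Aux

variable {G : Type*} [CommGroup G] {H : Submonoid G}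

lemma hunit_one : IsHUnit H 1 := ⟨H.one_mem, by simpa using H.one_mem⟩

lemma hunit_mul {x y : G} (hx : IsHUnit H x) (hy : IsHUnit H y) : IsHUnit H (x * y) :=
  ⟨H.mul_mem hx.1 hy.1, by rw [mul_inv]; exact H.mul_mem hx.2 hy.2⟩

lemma hunit_inv {x : G} (hx : IsHUnit H x) : IsHUnit H x⁻¹ := ⟨hx.2, by simpa using hx.1⟩

lemma hunit_div {x y : G} (hx : IsHUnit H x) (hy : IsHUnit H y) : IsHUnit H (x / y) := by
  rw [div_eq_mul_inv]; exact hunit_mul hx (hunit_inv hy)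

lemma hunit_left {x y : G} (hx : x ∈ H) (hy : y ∈ H) (h : IsHUnit H (x * y)) : IsHUnit H x := by
  refine ⟨hx, ?_⟩
  have hxy : x⁻¹ = y * (x * y)⁻¹ := by group
  rw [hxy]; exact H.mul_mem hy h.2

lemma prod_mem_of_atoms {z : Multiset G} (hz : ∀ v ∈ z, IsHAtom H v) : z.prod ∈ H :=
  Submonoid.multiset_prod_mem H z (fun v hv => (hz v hv).1)

lemma eq_zero_of_prod_unit {z : Multiset G} (hz : ∀ v ∈ z, IsHAtom H v)
    (hu : IsHUnit H z.prod) : z = 0 := by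
  classical
  by_contra h0
  obtain ⟨v, hv⟩ := Multiset.exists_mem_of_ne_zero h0
  have hcons : v ::ₘ z.erase v = z := Multiset.cons_erase hv
  have hprod : z.prod = v * (z.erase v).prod := by
    conv_lhs => rw [← hcons]
    rw [Multiset.prod_cons]
  have hvH : IsHUnit H v := by
    refine hunit_left (hz v hv).1 (prod_mem_of_atoms ?_) (by rw [← hprod]; exact hu)
    exact fun w hw => hz w (Multiset.mem_of_mem_erase hw)
  exact (hz v hv).2.1 hvH

lemma card_le_of_fdist {z z' : Multiset G} {N : ℕ} (h : fdist H z z' ≤ N) :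
    Multiset.card z ≤ Multiset.card z' + N := by
  have hne : {N : ℕ | ∃ x x' v w : Multiset G, z = x + v ∧ z' = x' + w ∧
      Multiset.Rel (HAssoc H) x x' ∧ max (Multiset.card v) (Multiset.card w) ≤ N}.Nonempty :=
    ⟨max (Multiset.card z) (Multiset.card z'), 0, 0, z, z', by simp, by simp,
      Multiset.Rel.zero, le_rfl⟩
  have hmem := Nat.sInf_mem hne
  obtain ⟨x, x', v, w, hzx, hzx', hrel, hmax⟩ := hmem
  have hcard : Multiset.card x = Multiset.card x' := Multiset.card_eq_card_of_rel hrel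
  have hle : max (Multiset.card v) (Multiset.card w) ≤ N := le_trans hmax h
  have h1 : Multiset.card z = Multiset.card x + Multiset.card v := by rw [hzx]; simp
  have h2 : Multiset.card z' = Multiset.card x' + Multiset.card w := by rw [hzx']; simp
  omega

lemma key_bound {N : ℕ} (hN : ∀ u : G, IsHAtom H u → TameBound H u N) :
    ∀ s : Multiset G, (∀ v ∈ s, IsHAtom H v) → ∀ a ∈ H, HAssoc H a s.prod →
      ∀ z : Multiset G, IsFactorization H a z →
        Multiset.card z ≤ (N + 1) * Multiset.card s := by
  classical
  intro s
  induction s using Multiset.induction_on with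
  | empty =>
    intro hs a ha hassoc z hz
    have hu : IsHUnit H a := by simpa [HAssoc] using hassoc
    have h1 : IsHUnit H z.prod := by
      have he : z.prod = a / (a / z.prod) := by
        simp [div_eq_mul_inv, mul_inv_rev, mul_comm, mul_left_comm, mul_assoc]
      rw [he]; exact hunit_div hu hz.2
    have := eq_zero_of_prod_unit hz.1 h1
    simp [this]
  | cons u s ih =>
    intro hs a ha hassoc z hz
    have hu : IsHAtom H u := hs u (Multiset.mem_cons_self u s)
    have hsa : ∀ v ∈ s, IsHAtom H v := fun v hv => hs v (Multiset.mem_cons_of_mem hv)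
    have hunit : IsHUnit H (a / (u * s.prod)) := by
      simpa [HAssoc, Multiset.prod_cons] using hassoc
    have hbH : a / u ∈ H := by
      have he : a / u = (a / (u * s.prod)) * s.prod := by
        simp [div_eq_mul_inv, mul_inv_rev, mul_comm, mul_left_comm, mul_assoc]
      rw [he]; exact H.mul_mem hunit.1 (prod_mem_of_atoms hsa)
    obtain ⟨z', hz', ⟨v, hv, hvu⟩, hdist⟩ :=
      hN u hu a ha ⟨a / u, hbH, by
        simp [div_eq_mul_inv, mul_inv_rev, mul_comm, mul_left_comm, mul_assoc]⟩ z hz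
    have hcard : Multiset.card z ≤ Multiset.card z' + N := card_le_of_fdist hdist
    have hcons : v ::ₘ z'.erase v = z' := Multiset.cons_erase hv
    have hprod : z'.prod = v * (z'.erase v).prod := by
      conv_lhs => rw [← hcons]
      rw [Multiset.prod_cons]
    have hz''atoms : ∀ w ∈ z'.erase v, IsHAtom H w :=
      fun w hw => hz'.1 w (Multiset.mem_of_mem_erase hw)
    have hfz'' : IsFactorization H (a / u) (z'.erase v) := by
      refine ⟨hz''atoms, ?_⟩
      have heq : (a / u) / (z'.erase v).prod = (a / z'.prod) * (v / u) := by
        rw [hprod, div_div, div_mul_div_comm, mul_comm a v,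
          mul_assoc v (z'.erase v).prod u, mul_div_mul_left_eq_div, mul_comm u (z'.erase v).prod]
      show IsHUnit H ((a / u) / (z'.erase v).prod)
      rw [heq]; exact hunit_mul hz'.2 hvu
    have hassoc' : HAssoc H (a / u) s.prod := by
      have he : (a / u) / s.prod = a / (u * s.prod) := by rw [div_div]
      show IsHUnit H ((a / u) / s.prod)
      rw [he]; exact hunit
    have hih := ih hsa (a / u) hbH hassoc' (z'.erase v) hfz''
    have hc' : Multiset.card z' = Multiset.card (z'.erase v) + 1 := by
      rw [← hcons]; simp
    rw [Multiset.card_cons]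
    calc Multiset.card z ≤ Multiset.card z' + N := hcard
      _ = Multiset.card (z'.erase v) + 1 + N := by omega
      _ ≤ (N + 1) * Multiset.card s + 1 + N := by omega
      _ = (N + 1) * (Multiset.card s + 1) := by ring

lemma elasticity_lt_top_of_globallyTame (hgt : GloballyTame H) : elasticity H < ⊤ := by
  obtain ⟨N, hN⟩ := hgt
  have hkey := key_bound hN
  have hle : elasticity H ≤ ((N : ENNReal) + 1) := by
    rw [elasticity]
    refine iSup_le fun a => iSup_le fun ha => iSup_le fun m => iSup_le fun hm =>
      iSup_le fun n => iSup_le fun hn => ?_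
    obtain ⟨s, hsc, hsa, hsassoc⟩ := hn
    obtain ⟨t, htc, hta, htassoc⟩ := hm
    have hmn : m ≤ (N + 1) * n := by
      have := hkey s hsa a ha hsassoc t ⟨hta, htassoc⟩
      rwa [hsc, htc] at this
    rcases Nat.eq_zero_or_pos n with h0 | hpos
    · have hm0 : m = 0 := by subst h0; simpa using hmn
      simp [hm0]
    · have hne : (n : ENNReal) ≠ 0 := by exact_mod_cast hpos.ne'
      rw [ENNReal.div_le_iff hne (by simp)]
      calc (m : ENNReal) ≤ (((N + 1) * n : ℕ) : ENNReal) := by exact_mod_cast hmn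
        _ = ((N : ENNReal) + 1) * n := by push_cast; ring
  exact lt_of_le_of_lt hle (by simp)

lemma rho_lt_top_of_elasticity (hel : elasticity H < ⊤) {k : ℕ} (hk : 0 < k) :
    rho H (k : ℕ∞) < ⊤ := by
  have hfin : elasticity H * k ≠ ⊤ := ENNReal.mul_ne_top hel.ne (by simp)
  obtain ⟨N, hNlt⟩ := ENNReal.exists_nat_gt hfin
  have hbound : rho H (k : ℕ∞) ≤ (N : ℕ∞) := by
    rw [rho]
    refine iSup_le fun a => iSup_le fun ha => iSup_le fun hex => iSup_le fun n =>
      iSup_le fun hn => ?_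
    obtain ⟨m, hm, hmk⟩ := hex
    have hmk' : m = k := by exact_mod_cast hmk
    subst hmk'
    have hle : (n : ENNReal) / m ≤ elasticity H := by
      rw [elasticity]
      exact le_iSup_of_le a (le_iSup_of_le ha (le_iSup_of_le n (le_iSup_of_le hn
        (le_iSup_of_le m (le_iSup_of_le hm le_rfl)))))
    have hnm : (n : ENNReal) ≤ elasticity H * m :=
      (ENNReal.div_le_iff (by exact_mod_cast hk.ne') (by simp)).1 hle
    have hlt : (n : ENNReal) < N := lt_of_le_of_lt hnm hNlt
    have : n ≤ N := by exact_mod_cast hlt.le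
    exact_mod_cast this
  exact lt_of_le_of_lt hbound (by simp)

lemma atom_aux : ∀ n : ℕ, ∀ a ∈ nonUnits H, nonUnits H ^ n ⊆ a • (H : Set G) →
    ∃ u : G, IsHAtom H u := by
  intro n
  induction n with
  | zero =>
    intro a ha hsub
    exfalso
    have h1 : (1 : G) ∈ nonUnits H ^ 0 := by simp [pow_zero, Set.mem_one]
    obtain ⟨y, hy, hey⟩ := Set.mem_smul_set.1 (hsub h1)
    rw [smul_eq_mul] at hey
    have hya : a⁻¹ = y := (mul_eq_one_iff_inv_eq.1 hey)
    exact ha.2 (hya ▸ hy)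
  | succ n ih =>
    intro a ha hsub
    by_cases hat : IsHAtom H a
    · exact ⟨a, hat⟩
    have hnu : ¬ IsHUnit H a := fun h => ha.2 h.2
    have hcon : ¬ ∀ b c : G, b ∈ H → c ∈ H → a = b * c → IsHUnit H b ∨ IsHUnit H c :=
      fun h => hat ⟨ha.1, hnu, h⟩
    push_neg at hcon
    obtain ⟨b, c, hb, hc, heq, hub, huc⟩ := hcon
    have hbnu : b ∈ nonUnits H := ⟨hb, fun h => hub ⟨hb, h⟩⟩
    have hcnu : c ∈ nonUnits H := ⟨hc, fun h => huc ⟨hc, h⟩⟩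
    refine ih b hbnu ?_
    intro x hx
    have hxc : x * c ∈ nonUnits H ^ (n + 1) := by
      rw [pow_succ]; exact Set.mul_mem_mul hx hcnu
    obtain ⟨y, hy, hey⟩ := Set.mem_smul_set.1 (hsub hxc)
    rw [smul_eq_mul] at hey
    refine Set.mem_smul_set.2 ⟨y, hy, ?_⟩
    rw [smul_eq_mul]
    have h2 : (b * y) * c = x * c := by rw [← hey, heq]; exact mul_right_comm b y c
    exact mul_right_cancel h2

lemma zero_not_mem_lengthSet {u : G} (hu : IsHAtom H u) {n : ℕ} (hn : 0 < n) :
    0 ∉ lengthSet H (u ^ n) := by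
  rintro ⟨s, hsc, -, hassoc⟩
  have hs0 : s = 0 := Multiset.card_eq_zero.1 hsc
  rw [hs0] at hassoc
  have hun : IsHUnit H (u ^ n) := by simpa [HAssoc] using hassoc
  apply hu.2.1
  refine ⟨hu.1, ?_⟩
  obtain ⟨m, rfl⟩ : ∃ m, n = m + 1 := ⟨n - 1, by omega⟩
  have he : u ^ m * (u ^ (m + 1))⁻¹ = u⁻¹ := by
    rw [pow_succ]
    simp [div_eq_mul_inv, mul_inv_rev, mul_comm, mul_left_comm, mul_assoc]
  rw [← he]
  exact H.mul_mem (H.pow_mem hu.1 _) hun.2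

lemma n_mem_lengthSet {u : G} (hu : IsHAtom H u) (n : ℕ) : n ∈ lengthSet H (u ^ n) := by
  refine ⟨Multiset.replicate n u, by simp, fun v hv => ?_, ?_⟩
  · rw [Multiset.eq_of_mem_replicate hv]; exact hu
  · rw [Multiset.prod_replicate]
    show IsHUnit H (u ^ n / u ^ n)
    rw [div_self']; exact hunit_one

lemma lambda_eq_top (hsp : IsStronglyPrimary H)
    (hrho : ∀ k : ℕ, 0 < k → rho H (k : ℕ∞) < ⊤) : Lambda H (H : Set G) = ⊤ := by
  by_contra hL
  obtain ⟨a, ha⟩ := hsp.1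
  obtain ⟨n0, _, hsub⟩ := hsp.2 a ha
  obtain ⟨u, hu⟩ := atom_aux n0 a ha hsub
  set lam := (Lambda H (H : Set G)).toNat with hlam
  have hLeq : Lambda H (H : Set G) = (lam : ℕ∞) := (ENat.coe_toNat hL).symm
  set B := (Finset.range (lam + 1)).sup (fun k => (rho H (k : ℕ∞)).toNat) with hB
  set n := B + 1 with hnB
  have hnemem : n ∈ lengthSet H (u ^ n) := n_mem_lengthSet hu n
  have hnon : (lengthSet H (u ^ n)).Nonempty := ⟨n, hnemem⟩
  set k := sInf (lengthSet H (u ^ n)) with hk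
  have hkmem : k ∈ lengthSet H (u ^ n) := Nat.sInf_mem hnon
  have hkpos : 0 < k := by
    rcases Nat.eq_zero_or_pos k with h0 | h
    · exact absurd (h0 ▸ hkmem) (zero_not_mem_lengthSet hu (by omega))
    · exact h
  have hklam : k ≤ lam := by
    have h1 : ((k : ℕ) : ℕ∞) ≤ Lambda H (H : Set G) := by
      rw [Lambda]
      exact le_iSup_of_le (u ^ n) (le_iSup_of_le (H.pow_mem hu.1 n)
        (le_iSup_of_le hnon le_rfl))
    rw [hLeq] at h1
    exact_mod_cast h1
  have h2 : (n : ℕ∞) ≤ rho H (k : ℕ∞) := by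
    rw [rho]
    exact le_iSup_of_le (u ^ n) (le_iSup_of_le (H.pow_mem hu.1 n)
      (le_iSup_of_le ⟨k, hkmem, rfl⟩ (le_iSup_of_le n (le_iSup_of_le hnemem le_rfl))))
  have hrk := hrho k hkpos
  have h3 : n ≤ (rho H (k : ℕ∞)).toNat := by
    rw [← ENat.coe_toNat hrk.ne] at h2
    exact_mod_cast h2
  have h4 : (rho H (k : ℕ∞)).toNat ≤ B := by
    rw [hB]
    exact Finset.le_sup (f := fun j : ℕ => (rho H (j : ℕ∞)).toNat)
      (Finset.mem_range.2 (by omega))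
  omega

end Aux

/-- For a strongly primary monoid `H`: globally tame implies finite
elasticity; finite elasticity implies `ρ_k(H) < ∞` for all `k`; and the latter
implies `Λ(H) = ∞`. -/
theorem stmt2 {G : Type*} [CommGroup G] (H : Submonoid G) (hq : IsQuotientGroup H)
    (hsp : IsStronglyPrimary H) :
    (GloballyTame H → elasticity H < ⊤) ∧
    (elasticity H < ⊤ → ∀ k : ℕ, 0 < k → rho H (k : ℕ∞) < ⊤) ∧
    ((∀ k : ℕ, 0 < k → rho H (k : ℕ∞) < ⊤) → Lambda H (H : Set G) = ⊤) := by
  exact ⟨elasticity_lt_top_of_globallyTame, fun h k hk => rho_lt_top_of_elasticity h hk,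
    lambda_eq_top hsp⟩
end

section
/- If H is a strongly primary monoid with Λ(H) = ∞ and nonempty conductor (H : Ĥ) ≠ ∅, then H is globally tame. -/
open Pointwise

namespace SP6

open Multiset

variable {G : Type*} [CommGroup G] {H : Submonoid G}

/-- Divisibility inside `H`. -/
def HDvd (H : Submonoid G) (a x : G) : Prop := ∃ h ∈ H, x = a * h

lemma hunit_one : IsHUnit H 1 := ⟨H.one_mem, by simpa using H.one_mem⟩

lemma hunit_mul {a b : G} (ha : IsHUnit H a) (hb : IsHUnit H b) : IsHUnit H (a * b) :=
  ⟨H.mul_mem ha.1 hb.1, by rw [mul_inv]; exact H.mul_mem ha.2 hb.2⟩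

lemma hunit_inv {a : G} (ha : IsHUnit H a) : IsHUnit H a⁻¹ :=
  ⟨ha.2, by simpa using ha.1⟩

lemma hunit_of_mul {a b : G} (ha : a ∈ H) (hb : b ∈ H) (h : IsHUnit H (a * b)) :
    IsHUnit H a ∧ IsHUnit H b := by
  constructor
  · exact ⟨ha, by have := H.mul_mem hb h.2; simpa [mul_comm, mul_assoc, mul_inv] using this⟩
  · exact ⟨hb, by have := H.mul_mem ha h.2; simpa [mul_comm, mul_assoc, mul_inv] using this⟩

lemma mem_nonUnits {a : G} (ha : a ∈ H) (hna : ¬ IsHUnit H a) : a ∈ nonUnits H :=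
  ⟨ha, fun hinv => hna ⟨ha, hinv⟩⟩

lemma nonUnits_subset : nonUnits H ⊆ (H : Set G) := fun _ hx => hx.1

lemma not_hunit_of_nonUnits {a : G} (ha : a ∈ nonUnits H) : ¬ IsHUnit H a :=
  fun h => ha.2 h.2

lemma nu_mul_mem {a h : G} (ha : a ∈ nonUnits H) (hh : h ∈ H) : a * h ∈ nonUnits H := by
  refine ⟨H.mul_mem ha.1 hh, fun hinv => ha.2 ?_⟩
  have := H.mul_mem hh hinv
  simpa [mul_inv, mul_comm, mul_assoc] using this

lemma mul_nu_mem {a h : G} (ha : a ∈ nonUnits H) (hh : h ∈ H) : h * a ∈ nonUnits H := by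
  rw [mul_comm]; exact nu_mul_mem ha hh

lemma prod_mem_H {s : Multiset G} (hs : ∀ x ∈ s, x ∈ H) : s.prod ∈ H :=
  Submonoid.multiset_prod_mem H s hs

lemma nu_pow {a : G} (ha : a ∈ nonUnits H) {n : ℕ} (hn : 0 < n) : a ^ n ∈ nonUnits H := by
  induction n with
  | zero => omega
  | succ k ih =>
    rcases Nat.eq_zero_or_pos k with hk | hk
    · simpa [hk] using ha
    · rw [pow_succ]
      exact nu_mul_mem (ih hk) ha.1

/-- Splitting a multiset into a part of prescribed size and the rest. -/
lemma exists_split (N : ℕ) :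
    ∀ s : Multiset G, N ≤ Multiset.card s → ∃ t u : Multiset G, s = t + u ∧ Multiset.card t = N := by
  induction N with
  | zero => exact fun s _ => ⟨0, s, by simp, by simp⟩
  | succ k ih =>
    intro s hs
    have hne : s ≠ 0 := by
      intro h; rw [h] at hs; simp at hs
    obtain ⟨x, hx⟩ := Multiset.exists_mem_of_ne_zero hne
    obtain ⟨s', rfl⟩ := Multiset.exists_cons_of_mem hx
    have hk : k ≤ Multiset.card s' := by
      simpa using hs
    obtain ⟨t, u, rfl, ht⟩ := ih s' hk
    exact ⟨x ::ₘ t, u, by simp [Multiset.cons_add], by simp [ht]⟩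

lemma prod_mem_set_pow {s : Multiset G} {M : Set G} (hs : ∀ x ∈ s, x ∈ M) :
    s.prod ∈ M ^ (Multiset.card s) := by
  induction s using Multiset.induction_on with
  | empty => simp [Set.mem_one]
  | cons a t ih =>
    have ha : a ∈ M := hs a (Multiset.mem_cons_self a t)
    have ht : ∀ x ∈ t, x ∈ M := fun x hx => hs x (Multiset.mem_cons_of_mem hx)
    rw [Multiset.prod_cons, Multiset.card_cons, pow_succ, mul_comm (M ^ Multiset.card t) M]
    exact Set.mul_mem_mul ha (ih ht)

/-- `a` divides the product of every multiset of at least `N` nonunits. -/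
def DvdAll (H : Submonoid G) (a : G) (N : ℕ) : Prop :=
  ∀ s : Multiset G, (∀ x ∈ s, x ∈ nonUnits H) → N ≤ Multiset.card s →
    ∃ h ∈ H, s.prod = a * h

lemma dvdAll_of_sp (hsp : IsStronglyPrimary H) {a : G} (ha : a ∈ nonUnits H) :
    ∃ N : ℕ, 0 < N ∧ DvdAll H a N := by
  obtain ⟨N, hN0, hN⟩ := hsp.2 a ha
  refine ⟨N, hN0, fun s hs hcard => ?_⟩
  obtain ⟨t, u, rfl, htc⟩ := exists_split N s hcard
  have htmem : t.prod ∈ nonUnits H ^ N := by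
    rw [← htc]; exact prod_mem_set_pow (fun x hx => hs x (Multiset.mem_add.2 (Or.inl hx)))
  have := hN htmem
  rw [Set.mem_smul_set] at this
  obtain ⟨y, hy, hy2⟩ := this
  refine ⟨y * u.prod, H.mul_mem hy (prod_mem_H (fun x hx => (hs x (Multiset.mem_add.2 (Or.inr hx))).1)), ?_⟩
  rw [Multiset.prod_add, ← hy2]
  simp [smul_eq_mul, mul_assoc]

lemma dvdAll_one : DvdAll H 1 0 :=
  fun s hs _ => ⟨s.prod, prod_mem_H (fun x hx => (hs x hx).1), by simp⟩

lemma dvdAll_mul {a b : G} {N₁ N₂ : ℕ} (h₁ : DvdAll H a N₁) (h₂ : DvdAll H b N₂) :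
    DvdAll H (a * b) (N₁ + N₂) := by
  intro s hs hcard
  obtain ⟨t, u, rfl, htc⟩ := exists_split N₁ s (le_trans (Nat.le_add_right _ _) hcard)
  have hu : N₂ ≤ Multiset.card u := by
    have := hcard; rw [Multiset.card_add, htc] at this; omega
  obtain ⟨h1, hh1, he1⟩ := h₁ t (fun x hx => hs x (Multiset.mem_add.2 (Or.inl hx))) (le_of_eq htc.symm)
  obtain ⟨h2, hh2, he2⟩ := h₂ u (fun x hx => hs x (Multiset.mem_add.2 (Or.inr hx))) hu
  refine ⟨h1 * h2, H.mul_mem hh1 hh2, ?_⟩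
  rw [Multiset.prod_add, he1, he2]
  exact mul_mul_mul_comm a h1 b h2

lemma dvdAll_pow {a : G} {N : ℕ} (h : DvdAll H a N) (n : ℕ) : DvdAll H (a ^ n) (n * N) := by
  induction n with
  | zero => simpa using dvdAll_one
  | succ k ih =>
    have := dvdAll_mul ih h
    rw [← pow_succ] at this
    simpa [Nat.succ_mul] using this

lemma dvdAll_congr {a b : G} {N : ℕ} (h : DvdAll H a N) (hu : IsHUnit H (b / a)) :
    DvdAll H b N := by
  intro s hs hcard
  obtain ⟨h1, hh1, he1⟩ := h s hs hcard
  refine ⟨(b / a)⁻¹ * h1, H.mul_mem hu.2 hh1, ?_⟩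
  rw [he1]
  simp [div_eq_mul_inv, mul_inv_rev, mul_comm, mul_left_comm, mul_assoc]

/-- Upper bound on the size of multisets of nonunits with a given product. -/
lemma card_le_of_dvdAll {a : G} {N : ℕ} (hD : DvdAll H a N) {s : Multiset G}
    (hs : ∀ x ∈ s, x ∈ nonUnits H) (hprod : s.prod = a) : Multiset.card s ≤ N := by
  by_contra hc
  push_neg at hc
  obtain ⟨t, u, rfl, htc⟩ := exists_split N _ (le_of_lt hc)
  have hucard : 1 ≤ Multiset.card u := by
    have := hc; rw [Multiset.card_add, htc] at this; omega
  obtain ⟨h1, hh1, he1⟩ := hD t (fun x hx => hs x (Multiset.mem_add.2 (Or.inl hx))) (le_of_eq htc.symm)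
  have hne : u ≠ 0 := by
    intro h; rw [h] at hucard; simp at hucard
  obtain ⟨x, hx⟩ := Multiset.exists_mem_of_ne_zero hne
  obtain ⟨u', rfl⟩ := Multiset.exists_cons_of_mem hx
  have key : (1 : G) = h1 * (x * u'.prod) := by
    have h2 : a * (h1 * (x * u'.prod)) = a * 1 := by
      rw [mul_one]
      calc a * (h1 * (x * u'.prod)) = (a * h1) * (x * u'.prod) := (mul_assoc a h1 _).symm
        _ = t.prod * (x ::ₘ u').prod := by rw [he1, Multiset.prod_cons]
        _ = a := by rw [← Multiset.prod_add, hprod]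
    exact (mul_left_cancel h2).symm
  have hxH : x ∈ nonUnits H := hs x (Multiset.mem_add.2 (Or.inr (Multiset.mem_cons_self x u')))
  apply hxH.2
  have hmul : x * (h1 * u'.prod) = 1 := by
    rw [key]
    simp [mul_comm, mul_left_comm, mul_assoc]
  have : x⁻¹ = h1 * u'.prod := inv_eq_of_mul_eq_one_right hmul
  rw [this]
  exact H.mul_mem hh1 (prod_mem_H (fun y hy => (hs y (Multiset.mem_add.2 (Or.inr (Multiset.mem_cons_of_mem hy)))).1))

end SP6

namespace SP6

variable {G : Type*} [CommGroup G] {H : Submonoid G}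

lemma atom_mem {u : G} (hu : IsHAtom H u) : u ∈ nonUnits H :=
  mem_nonUnits hu.1 hu.2.1

lemma hunit_mul_atom {ε u : G} (hε : IsHUnit H ε) (hu : IsHAtom H u) : IsHAtom H (ε * u) := by
  refine ⟨H.mul_mem hε.1 hu.1, ?_, ?_⟩
  · intro hunit
    apply hu.2.1
    have : IsHUnit H (ε⁻¹ * (ε * u)) := hunit_mul (hunit_inv hε) hunit
    simpa [mul_assoc] using this
  · intro a b ha hb heq
    have heq2 : u = (ε⁻¹ * a) * b := by
      rw [mul_assoc]
      calc u = ε⁻¹ * (ε * u) := by simp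
        _ = ε⁻¹ * (a * b) := by rw [heq]
    rcases hu.2.2 _ _ (H.mul_mem hε.2 ha) hb heq2 with h | h
    · left
      have : IsHUnit H (ε * (ε⁻¹ * a)) := hunit_mul hε h
      simpa [mul_assoc] using this
    · right; exact h

/-- Atomicity: every nonunit is a product of at least one atom, exactly. -/
lemma exists_atoms_aux (n : ℕ) :
    ∀ a ∈ nonUnits H, (∀ s : Multiset G, (∀ x ∈ s, x ∈ nonUnits H) → s.prod = a →
      Multiset.card s ≤ n) →
      ∃ s : Multiset G, (∀ x ∈ s, IsHAtom H x) ∧ s.prod = a ∧ 1 ≤ Multiset.card s := by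
  induction n with
  | zero =>
    intro a ha hb
    have := hb {a} (by simpa using ha) (by simp)
    simp at this
  | succ k ih =>
    intro a ha hb
    by_cases hatom : IsHAtom H a
    · exact ⟨{a}, by simpa using hatom, by simp, by simp⟩
    · have : ∃ b c : G, b ∈ H ∧ c ∈ H ∧ a = b * c ∧ ¬ IsHUnit H b ∧ ¬ IsHUnit H c := by
        by_contra hcon
        push_neg at hcon
        exact hatom ⟨ha.1, not_hunit_of_nonUnits ha, fun b c hbH hcH heq => by
          by_contra hnone
          push_neg at hnone
          exact hnone.2 (hcon b c hbH hcH heq hnone.1)⟩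
      obtain ⟨b, c, hbH, hcH, heq, hbu, hcu⟩ := this
      have hbm : b ∈ nonUnits H := mem_nonUnits hbH hbu
      have hcm : c ∈ nonUnits H := mem_nonUnits hcH hcu
      have hbbound : ∀ s : Multiset G, (∀ x ∈ s, x ∈ nonUnits H) → s.prod = b →
          Multiset.card s ≤ k := by
        intro s hs hsp
        have := hb (c ::ₘ s) (by
          intro x hx
          rcases Multiset.mem_cons.1 hx with h | h
          · rwa [h]
          · exact hs x h) (by rw [Multiset.prod_cons, hsp, mul_comm, heq])
        simpa using this
      have hcbound : ∀ s : Multiset G, (∀ x ∈ s, x ∈ nonUnits H) → s.prod = c →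
          Multiset.card s ≤ k := by
        intro s hs hsp
        have := hb (b ::ₘ s) (by
          intro x hx
          rcases Multiset.mem_cons.1 hx with h | h
          · rwa [h]
          · exact hs x h) (by rw [Multiset.prod_cons, hsp, heq])
        simpa using this
      obtain ⟨sb, hsb, hsbp, hsbc⟩ := ih b hbm hbbound
      obtain ⟨sc, hsc, hscp, hscc⟩ := ih c hcm hcbound
      refine ⟨sb + sc, ?_, ?_, ?_⟩
      · intro x hx
        rcases Multiset.mem_add.1 hx with h | h
        · exact hsb x h
        · exact hsc x h
      · rw [Multiset.prod_add, hsbp, hscp, heq]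
      · rw [Multiset.card_add]; omega

lemma exists_atoms (hsp : IsStronglyPrimary H) {a : G} (ha : a ∈ nonUnits H) :
    ∃ s : Multiset G, (∀ x ∈ s, IsHAtom H x) ∧ s.prod = a ∧ 1 ≤ Multiset.card s := by
  obtain ⟨N, _, hD⟩ := dvdAll_of_sp hsp ha
  exact exists_atoms_aux N a ha (fun s hs hp => card_le_of_dvdAll hD hs hp)

end SP6

namespace SP6

variable {G : Type*} [CommGroup G] {H : Submonoid G}

lemma mem_lengthSet_exact {s : Multiset G} {x : G} (hs : ∀ v ∈ s, IsHAtom H v)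
    (hp : s.prod = x) : Multiset.card s ∈ lengthSet H x := by
  refine ⟨s, rfl, hs, ?_⟩
  rw [hp]
  show IsHUnit H (x / x)
  rw [div_self']
  exact hunit_one

lemma mem_lengthSet_mul {x y : G} {k l : ℕ} (hk : k ∈ lengthSet H x) (hl : l ∈ lengthSet H y) :
    k + l ∈ lengthSet H (x * y) := by
  obtain ⟨s, hsc, hsa, hsu⟩ := hk
  obtain ⟨t, htc, hta, htu⟩ := hl
  refine ⟨s + t, by simp [hsc, htc], ?_, ?_⟩
  · intro v hv
    rcases Multiset.mem_add.1 hv with h | h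
    · exact hsa v h
    · exact hta v h
  · show IsHUnit H (x * y / (s + t).prod)
    rw [Multiset.prod_add]
    have : x * y / (s.prod * t.prod) = (x / s.prod) * (y / t.prod) := by
      simp [div_eq_mul_inv, mul_inv_rev, mul_comm, mul_left_comm, mul_assoc]
    rw [this]
    exact hunit_mul hsu htu

lemma zero_mem_lengthSet {x : G} (hx : IsHUnit H x) : 0 ∈ lengthSet H x := by
  refine ⟨0, by simp, by simp, ?_⟩
  show IsHUnit H (x / Multiset.prod 0)
  simpa using hx

/-- Elements of `H` not divisible by `f` have all factorization lengths `< Mf`. -/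
lemma short_of_not_fdvd {f : G} {Mf : ℕ} (hMf : DvdAll H f Mf) {x : G}
    (hnf : ¬ ∃ h ∈ H, x = f * h) {s : Multiset G}
    (hs' : ∀ v ∈ s, v ∈ nonUnits H) (hp : s.prod = x) : Multiset.card s < Mf := by
  by_contra hc
  push_neg at hc
  obtain ⟨t, u, rfl, htc⟩ := exists_split Mf s hc
  obtain ⟨h, hhH, hh⟩ := hMf t (fun v hv => hs' v (Multiset.mem_add.2 (Or.inl hv))) (le_of_eq htc.symm)
  apply hnf
  refine ⟨h * u.prod, H.mul_mem hhH (prod_mem_H (fun v hv => (hs' v (Multiset.mem_add.2 (Or.inr hv))).1)), ?_⟩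
  rw [← hp, Multiset.prod_add, hh, mul_assoc]

/-- From `Λ(H) = ∞`: elements all of whose lengths are large. -/
lemma exists_big_lengths (hL : Lambda H (H : Set G) = ⊤) (C : ℕ) :
    ∃ a ∈ H, (lengthSet H a).Nonempty ∧ ∀ ℓ ∈ lengthSet H a, C ≤ ℓ := by
  by_contra hcon
  push_neg at hcon
  have hb : Lambda H (H : Set G) ≤ (C : ℕ∞) := by
    refine iSup_le fun a => iSup_le fun haH => iSup_le fun hNE => ?_
    obtain ⟨ℓ, hℓmem, hℓlt⟩ := hcon a haH hNE
    have h1 : sInf (lengthSet H a) ≤ ℓ := Nat.sInf_le hℓmem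
    have : sInf (lengthSet H a) ≤ C := le_trans h1 (le_of_lt hℓlt)
    exact_mod_cast Nat.cast_le.2 this
  rw [hL] at hb
  have : (C : ℕ∞) ≠ ⊤ := by simp
  exact this (top_le_iff.1 hb)

end SP6

namespace SP6

variable {G : Type*} [CommGroup G] {H : Submonoid G}

/-- STEP A: arbitrarily "tall" powers of `f`: all factorization lengths of `f^T` large. -/
lemma exists_tall_fpow (hsp : IsStronglyPrimary H) (hL : Lambda H (H : Set G) = ⊤)
    {f : G} (hf : f ∈ nonUnits H) {Mf : ℕ} (hMf : DvdAll H f Mf) (hMf0 : 0 < Mf) (C : ℕ) :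
    ∃ T : ℕ, ∀ ℓ ∈ lengthSet H (f ^ T), C ≤ ℓ := by
  obtain ⟨a, haH, hNE, hbig⟩ := exists_big_lengths hL (C + Mf)
  -- `a` is a nonunit
  have ham : a ∈ nonUnits H := by
    refine mem_nonUnits haH (fun hu => ?_)
    have := hbig 0 (zero_mem_lengthSet hu)
    omega
  obtain ⟨Na, hNa0, hNa⟩ := dvdAll_of_sp hsp ham
  -- the set of `t` with `f^t ∣ a` in `H`
  set S : Set ℕ := {t | ∃ h ∈ H, a = f ^ t * h} with hS
  have h0S : 0 ∈ S := ⟨a, haH, by simp⟩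
  have hSbdd : BddAbove S := by
    refine ⟨Na, fun t ht => ?_⟩
    rcases Nat.eq_zero_or_pos t with rfl | htpos
    · omega
    · obtain ⟨h, hhH, hh⟩ := ht
      have hcle : Multiset.card (Multiset.replicate (t - 1) f + {f * h}) ≤ Na := by
        apply card_le_of_dvdAll hNa
        · intro x hx
          rcases Multiset.mem_add.1 hx with h1 | h1
          · rw [Multiset.eq_of_mem_replicate h1]; exact hf
          · rw [Multiset.mem_singleton.1 h1]; exact nu_mul_mem hf hhH
        · rw [Multiset.prod_add, Multiset.prod_replicate, Multiset.prod_singleton, hh]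
          rw [← mul_assoc, ← pow_succ]
          have he : t - 1 + 1 = t := by omega
          rw [he]
      have hceq : Multiset.card (Multiset.replicate (t - 1) f + {f * h}) = t := by
        simp [Multiset.card_replicate]
        omega
      omega
  have hTS : sSup S ∈ S := Nat.sSup_mem ⟨0, h0S⟩ hSbdd
  set T := sSup S with hT
  obtain ⟨s₀, hs₀H, hs₀⟩ := hTS
  have hs₀nf : ¬ ∃ w ∈ H, s₀ = f * w := by
    rintro ⟨w, hwH, rfl⟩
    have : T + 1 ∈ S := ⟨w, hwH, by rw [hs₀, ← mul_assoc, ← pow_succ]⟩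
    have := le_csSup hSbdd this
    omega
  refine ⟨T, fun ℓ hℓ => ?_⟩
  obtain ⟨s, hsc, hsa, hsu⟩ := hℓ
  have hsu' : IsHUnit H (f ^ T / s.prod) := hsu
  set q : G := (f ^ T / s.prod) * s₀ with hq
  have hqH : q ∈ H := H.mul_mem hsu'.1 hs₀H
  have haq : a = s.prod * q := by
    rw [hq, hs₀]
    simp [div_eq_mul_inv, mul_inv_rev, mul_comm, mul_left_comm, mul_assoc]
  by_cases hqu : IsHUnit H q
  · have : ℓ ∈ lengthSet H a := by
      refine ⟨s, hsc, hsa, ?_⟩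
      show IsHUnit H (a / s.prod)
      have : a / s.prod = q := by
        rw [haq]
        simp [div_eq_mul_inv, mul_inv_rev, mul_comm, mul_left_comm, mul_assoc]
      rwa [this]
    have := hbig ℓ this
    omega
  · have hqm : q ∈ nonUnits H := mem_nonUnits hqH hqu
    have hqnf : ¬ ∃ w ∈ H, q = f * w := by
      rintro ⟨w, hwH, hw⟩
      apply hs₀nf
      refine ⟨(f ^ T / s.prod)⁻¹ * w, H.mul_mem hsu'.2 hwH, ?_⟩
      have : s₀ = (f ^ T / s.prod)⁻¹ * q := by
        rw [hq]
        simp [mul_comm, mul_left_comm, mul_assoc]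
      rw [this, hw]
      simp [mul_comm, mul_left_comm, mul_assoc]
    obtain ⟨sq, hsqa, hsqp, hsqc⟩ := exists_atoms hsp hqm
    have hshort : Multiset.card sq < Mf :=
      short_of_not_fdvd hMf hqnf (fun v hv => atom_mem (hsqa v hv)) hsqp
    have hcomb : ℓ + Multiset.card sq ∈ lengthSet H a := by
      have h1 : Multiset.card s + Multiset.card sq ∈ lengthSet H (s.prod * q) :=
        mem_lengthSet_mul (mem_lengthSet_exact hsa rfl) (mem_lengthSet_exact hsqa hsqp)
      rw [← haq, hsc] at h1
      exact h1
    have := hbig _ hcomb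
    omega

end SP6

namespace SP6

variable {G : Type*} [CommGroup G] {H : Submonoid G}

/-- STEP B: an atom `u` never satisfies `f^(2k+1) ∣ u^k`. -/
lemma atom_pow_bound {f : G} (hf : f ∈ nonUnits H)
    (hcond : ∀ x ∈ hatH H, f * x ∈ H) {u : G} (hu : IsHAtom H u) (k : ℕ) :
    ¬ ∃ h ∈ H, u ^ k = f ^ (2 * k + 1) * h := by
  rintro ⟨h, hhH, hk⟩
  rcases Nat.eq_zero_or_pos k with rfl | hkpos
  · simp at hk
    have : f * (h : G) = 1 := by
      rw [← hk]
    exact hf.2 (by rw [inv_eq_of_mul_eq_one_right this]; exact hhH)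
  · -- y = u / f^2 is almost integral
    set y : G := u / f ^ 2 with hy
    have hyk : y ^ k = f * h := by
      rw [hy, div_pow, ← pow_mul, hk]
      rw [pow_succ]
      simp [div_eq_mul_inv, mul_inv_rev, mul_comm, mul_left_comm, mul_assoc]
    have hhat : y ∈ hatH H := by
      refine ⟨f ^ (2 * k), H.pow_mem hf.1 _, fun t => ?_⟩
      have ht : t = k * (t / k) + t % k := (Nat.div_add_mod t k).symm
      set q := t / k
      set r := t % k
      have hrk : r < k := Nat.mod_lt _ hkpos
      have hyt : y ^ t = (f * h) ^ q * y ^ r := by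
        rw [ht, pow_add, pow_mul, hyk]
      have hyr : y ^ r = u ^ r / f ^ (2 * r) := by
        rw [hy, div_pow, ← pow_mul]
      have hsplit : 2 * k = (2 * k - 2 * r) + 2 * r := by omega
      have : f ^ (2 * k) * y ^ t = f ^ (2 * k - 2 * r) * ((f ^ q * h ^ q) * u ^ r) := by
        rw [hyt, hyr, mul_pow, hsplit, pow_add]
        simp [div_eq_mul_inv, mul_comm, mul_left_comm, mul_assoc]
      rw [this]
      exact H.mul_mem (H.pow_mem hf.1 _)
        (H.mul_mem (H.mul_mem (H.pow_mem hf.1 _) (H.pow_mem hhH _)) (H.pow_mem hu.1 _))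
    have hw : u / f ∈ H := by
      have := hcond y hhat
      have heq : f * y = u / f := by
        rw [hy, pow_two, ← div_div]
        simp
      rwa [heq] at this
    have hufw : u = f * (u / f) := by
      simp
    rcases hu.2.2 f (u / f) hf.1 hw hufw with hc | hc
    · exact (not_hunit_of_nonUnits hf) hc
    · -- u / f is a unit, derive f⁻¹ ∈ H
      set w : G := u / f with hwdef
      have hwk : w ^ k = f ^ (k + 1) * h := by
        have h1 : u ^ k = f ^ k * w ^ k := by
          rw [hufw, mul_pow]
        have h2 : f ^ k * w ^ k = f ^ k * (f ^ (k + 1) * h) := by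
          rw [← h1, hk]
          rw [show 2 * k + 1 = k + (k + 1) by omega, pow_add]
          rw [mul_assoc]
        exact mul_left_cancel h2
      have hfinv : f⁻¹ = f ^ k * (h * (w⁻¹) ^ k) := by
        have hone : f * (f ^ k * (h * (w⁻¹) ^ k)) = 1 := by
          have : f * (f ^ k * (h * (w⁻¹) ^ k)) = (f ^ (k+1) * h) * (w⁻¹) ^ k := by
            rw [pow_succ]
            simp [mul_comm, mul_left_comm, mul_assoc]
          rw [this, ← hwk, inv_pow]
          simp
        exact inv_eq_of_mul_eq_one_right hone
      apply hf.2
      rw [hfinv]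
      exact H.mul_mem (H.pow_mem hf.1 _) (H.mul_mem hhH (H.pow_mem hc.2 _))

/-- The `f`-adic value of `x^k` in `H`. -/
noncomputable def fval (H : Submonoid G) (f x : G) (k : ℕ) : ℕ :=
  sSup {t | ∃ h ∈ H, x ^ k = f ^ t * h}

lemma fval_set_nonempty {f x : G} (hx : x ∈ H) (k : ℕ) :
    {t | ∃ h ∈ H, x ^ k = f ^ t * h}.Nonempty :=
  ⟨0, x ^ k, H.pow_mem hx k, by simp⟩

lemma fval_set_bdd (hsp : IsStronglyPrimary H) {f x : G} (hf : f ∈ nonUnits H)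
    (hx : x ∈ nonUnits H) (k : ℕ) : BddAbove {t | ∃ h ∈ H, x ^ k = f ^ t * h} := by
  obtain ⟨Nx, hNx0, hNx⟩ := dvdAll_of_sp hsp hx
  refine ⟨k * Nx, fun t ht => ?_⟩
  rcases Nat.eq_zero_or_pos t with rfl | htpos
  · omega
  · obtain ⟨h, hhH, hh⟩ := ht
    have hD := dvdAll_pow hNx k
    have hcle : Multiset.card (Multiset.replicate (t - 1) f + {f * h}) ≤ k * Nx := by
      apply card_le_of_dvdAll hD
      · intro z hz
        rcases Multiset.mem_add.1 hz with h1 | h1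
        · rw [Multiset.eq_of_mem_replicate h1]; exact hf
        · rw [Multiset.mem_singleton.1 h1]; exact nu_mul_mem hf hhH
      · rw [Multiset.prod_add, Multiset.prod_replicate, Multiset.prod_singleton, hh]
        rw [← mul_assoc, ← pow_succ]
        have he : t - 1 + 1 = t := by omega
        rw [he]
    have hceq : Multiset.card (Multiset.replicate (t - 1) f + {f * h}) = t := by
      simp [Multiset.card_replicate]
      omega
    omega

lemma fval_spec (hsp : IsStronglyPrimary H) {f x : G} (hf : f ∈ nonUnits H)
    (hx : x ∈ nonUnits H) (k : ℕ) :
    ∃ h ∈ H, x ^ k = f ^ (fval H f x k) * h ∧ ¬ ∃ w ∈ H, h = f * w := by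
  have hmem : fval H f x k ∈ {t | ∃ h ∈ H, x ^ k = f ^ t * h} :=
    Nat.sSup_mem (fval_set_nonempty hx.1 k) (fval_set_bdd hsp hf hx k)
  obtain ⟨h, hhH, hh⟩ := hmem
  refine ⟨h, hhH, hh, ?_⟩
  rintro ⟨w, hwH, rfl⟩
  have : fval H f x k + 1 ∈ {t | ∃ h ∈ H, x ^ k = f ^ t * h} :=
    ⟨w, hwH, by rw [hh, ← mul_assoc, ← pow_succ]⟩
  have := le_csSup (fval_set_bdd hsp hf hx k) this
  change fval H f x k + 1 ≤ fval H f x k at this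
  omega

lemma fval_mono (hsp : IsStronglyPrimary H) {f x : G} (hf : f ∈ nonUnits H)
    (hx : x ∈ nonUnits H) (k : ℕ) : fval H f x k ≤ fval H f x (k + 1) := by
  obtain ⟨h, hhH, hh, _⟩ := fval_spec hsp hf hx k
  have : fval H f x k ∈ {t | ∃ h ∈ H, x ^ (k + 1) = f ^ t * h} :=
    ⟨x * h, H.mul_mem hx.1 hhH, by rw [pow_succ, hh]; simp [mul_comm, mul_left_comm, mul_assoc]⟩
  exact le_csSup (fval_set_bdd hsp hf hx (k + 1)) this

lemma fval_le_atom (hsp : IsStronglyPrimary H) {f x : G} (hf : f ∈ nonUnits H)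
    (hcond : ∀ z ∈ hatH H, f * z ∈ H) (hx : IsHAtom H x) (k : ℕ) :
    fval H f x k ≤ 2 * k := by
  by_contra hc
  push_neg at hc
  obtain ⟨h, hhH, hh, _⟩ := fval_spec hsp hf (atom_mem hx) k
  apply atom_pow_bound hf hcond hx k
  refine ⟨f ^ (fval H f x k - (2 * k + 1)) * h, H.mul_mem (H.pow_mem hf.1 _) hhH, ?_⟩
  rw [hh, ← mul_assoc, ← pow_add]
  congr 2
  omega

/-- EXTRACT: pulling the maximal `f`-power out of a product of `k`-th powers of atoms. -/
lemma extract (hsp : IsStronglyPrimary H) {f : G} (hf : f ∈ nonUnits H) {Mf : ℕ}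
    (hMf : DvdAll H f Mf) :
    ∀ (s : Multiset G), (∀ x ∈ s, IsHAtom H x) → ∀ k : ℕ,
      ∃ (W : Multiset G) (η : G), (∀ x ∈ W, IsHAtom H x) ∧ IsHUnit H η ∧
        (s.map (fun w => w ^ k)).prod =
          f ^ ((s.map (fun w => fval H f w k)).sum) * (W.prod * η) ∧
        Multiset.card W ≤ Multiset.card s * (Mf - 1) := by
  intro s
  induction s using Multiset.induction_on with
  | empty =>
    intro _ k
    exact ⟨0, 1, by simp, hunit_one, by simp, by simp⟩
  | cons w s' ih =>
    intro hs k
    have hw : IsHAtom H w := hs w (Multiset.mem_cons_self w s')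
    obtain ⟨W', η', hW'a, hη', hprod', hcard'⟩ :=
      ih (fun x hx => hs x (Multiset.mem_cons_of_mem hx)) k
    obtain ⟨h, hhH, hh, hhnf⟩ := fval_spec hsp hf (atom_mem hw) k
    by_cases hhu : IsHUnit H h
    · refine ⟨W', h * η', hW'a, hunit_mul hhu hη', ?_, ?_⟩
      · rw [Multiset.map_cons, Multiset.prod_cons, Multiset.map_cons, Multiset.sum_cons,
          hh, hprod', pow_add]
        simp [mul_comm, mul_left_comm, mul_assoc]
      · calc Multiset.card W' ≤ Multiset.card s' * (Mf - 1) := hcard'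
          _ ≤ Multiset.card (w ::ₘ s') * (Mf - 1) := by
              rw [Multiset.card_cons]; exact Nat.mul_le_mul_right _ (by omega)
    · have hhm : h ∈ nonUnits H := mem_nonUnits hhH hhu
      obtain ⟨sh, hsha, hshp, hshc⟩ := exists_atoms hsp hhm
      have hshort : Multiset.card sh < Mf :=
        short_of_not_fdvd hMf hhnf (fun v hv => atom_mem (hsha v hv)) hshp
      refine ⟨sh + W', η', ?_, hη', ?_, ?_⟩
      · intro x hx
        rcases Multiset.mem_add.1 hx with h1 | h1
        · exact hsha x h1
        · exact hW'a x h1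
      · rw [Multiset.map_cons, Multiset.prod_cons, Multiset.map_cons, Multiset.sum_cons,
          hh, hprod', pow_add, Multiset.prod_add, hshp]
        simp [mul_comm, mul_left_comm, mul_assoc]
      · rw [Multiset.card_add, Multiset.card_cons, Nat.succ_mul]
        omega

end SP6

namespace SP6

variable {G : Type*} [CommGroup G] {H : Submonoid G}

/-- The crux: assuming `Λ(H)=∞` and `f` in the conductor, every atom divides `f^3` in `H`. -/
lemma atom_dvd_f3 (hsp : IsStronglyPrimary H) (hL : Lambda H (H : Set G) = ⊤)
    {f : G} (hf : f ∈ nonUnits H) (hcond : ∀ x ∈ hatH H, f * x ∈ H)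
    {Mf : ℕ} (hMf : DvdAll H f Mf) (hMf0 : 0 < Mf)
    {u : G} (hu : IsHAtom H u) : ∃ h ∈ H, f ^ 3 = u * h := by
  by_contra hno
  push_neg at hno
  have hum : u ∈ nonUnits H := atom_mem hu
  obtain ⟨Nu, hNu0, hNu⟩ := dvdAll_of_sp hsp hum
  -- the minimal `f`-power divisible by `u^n`
  have hKSne : ∀ n : ℕ, {j : ℕ | ∃ h ∈ H, f ^ j = u ^ n * h}.Nonempty := by
    intro n
    have hD := dvdAll_pow hNu n
    obtain ⟨h, hhH, hh⟩ := hD (Multiset.replicate (n * Nu) f)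
      (fun x hx => by rw [Multiset.eq_of_mem_replicate hx]; exact hf)
      (by simp)
    exact ⟨n * Nu, h, hhH, by rwa [Multiset.prod_replicate] at hh⟩
  set K : ℕ → ℕ := fun n => sInf {j : ℕ | ∃ h ∈ H, f ^ j = u ^ n * h} with hKdef
  have hKspec : ∀ n, ∃ h ∈ H, f ^ (K n) = u ^ n * h := fun n => Nat.sInf_mem (hKSne n)
  -- CLAIM 2: the gap `K n - 2n` is unbounded since `u` does not divide `f^3`
  have hclaim : ∃ n : ℕ, 2 * n + 4 * Mf + 1 ≤ K n := by
    by_contra hcon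
    push_neg at hcon
    have hyhat : f ^ 2 / u ∈ hatH H := by
      refine ⟨f ^ (4 * Mf + 2), H.pow_mem hf.1 _, fun t => ?_⟩
      obtain ⟨ht, hhtH, hht⟩ := hKspec t
      have hKle : K t ≤ 2 * t + 4 * Mf := by
        have := hcon t; omega
      have key : f ^ (4 * Mf + 2) * (f ^ 2 / u) ^ t
          = f ^ (4 * Mf + 2 + 2 * t - K t) * ht := by
        rw [div_pow, ← pow_mul]
        rw [← mul_div_assoc, ← pow_add]
        have h1 : 4 * Mf + 2 + 2 * t = (4 * Mf + 2 + 2 * t - K t) + K t := by omega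
        rw [h1, pow_add, mul_div_assoc, hht]
        have h2 : u ^ t * ht / u ^ t = ht := by
          rw [mul_comm, mul_div_assoc]
          simp
        rw [h2]
        have h3 : 4 * Mf + 2 + 2 * t - K t + K t - K t = 4 * Mf + 2 + 2 * t - K t := by
          omega
        rw [h3]
      rw [key]
      exact H.mul_mem (H.pow_mem hf.1 _) hhtH
    have hfin : f * (f ^ 2 / u) ∈ H := hcond _ hyhat
    have heq : f * (f ^ 2 / u) = f ^ 3 / u := by
      rw [← mul_div_assoc]
      congr 1
      rw [← pow_succ']
    rw [heq] at hfin
    have hmul : u * (f ^ 3 / u) = f ^ 3 := by simp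
    exact hno _ hfin hmul.symm
  obtain ⟨n, hn⟩ := hclaim
  -- setup: maximal f-power in u^n, minimal f-power divisible by u^n
  have hg := fval_spec hsp hf hum n
  obtain ⟨h₁, hh₁H, hh₁, hh₁nf⟩ := hg
  have hgle : fval H f u n ≤ 2 * n := fval_le_atom hsp hf hcond hu n
  obtain ⟨h₂, hh₂H, hh₂⟩ := hKspec n
  have hKpos : 1 ≤ K n := by omega
  have hh₂nf : ¬ ∃ w ∈ H, h₂ = f * w := by
    rintro ⟨w, hwH, rfl⟩
    have hmem : K n - 1 ∈ {j : ℕ | ∃ h ∈ H, f ^ j = u ^ n * h} := by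
      refine ⟨w, hwH, ?_⟩
      have : f ^ (K n - 1) * f = u ^ n * w * f := by
        rw [← pow_succ]
        have h1 : K n - 1 + 1 = K n := by omega
        rw [h1, hh₂]
        simp [mul_comm, mul_left_comm, mul_assoc]
      exact mul_right_cancel this
    have := Nat.sInf_le hmem
    change K n ≤ K n - 1 at this
    omega
  set g := fval H f u n with hgdef
  set D := K n - g with hDdef
  have hD : 4 * Mf + 1 ≤ D := by omega
  have hfD : f ^ D = h₁ * h₂ := by
    have h1 : f ^ (K n) = f ^ g * (h₁ * h₂) := by
      rw [hh₂, hh₁, mul_assoc]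
    have h2 : f ^ (K n) = f ^ g * f ^ D := by
      rw [← pow_add]
      congr 1
      omega
    rw [h1] at h2
    exact (mul_left_cancel h2.symm)
  -- h₁ and h₂ are nonunits
  have hh₁m : h₁ ∈ nonUnits H := by
    refine mem_nonUnits hh₁H (fun hun => ?_)
    apply hh₂nf
    refine ⟨f ^ (D - 1) * h₁⁻¹, H.mul_mem (H.pow_mem hf.1 _) hun.2, ?_⟩
    have heq2 : h₂ = f ^ D * h₁⁻¹ := by
      rw [hfD]
      simp [mul_comm, mul_left_comm, mul_assoc]
    have hsplitD : f ^ D = f * f ^ (D - 1) := by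
      have hD1 : D - 1 + 1 = D := by omega
      rw [← pow_succ', hD1]
    rw [heq2, hsplitD, mul_assoc]
  have hh₂m : h₂ ∈ nonUnits H := by
    refine mem_nonUnits hh₂H (fun hun => ?_)
    apply hh₁nf
    refine ⟨f ^ (D - 1) * h₂⁻¹, H.mul_mem (H.pow_mem hf.1 _) hun.2, ?_⟩
    have heq2 : h₁ = f ^ D * h₂⁻¹ := by
      rw [hfD]
      simp [mul_comm, mul_left_comm, mul_assoc]
    have hsplitD : f ^ D = f * f ^ (D - 1) := by
      have hD1 : D - 1 + 1 = D := by omega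
      rw [← pow_succ', hD1]
    rw [heq2, hsplitD, mul_assoc]
  -- factor h₁ h₂ into at most 2Mf - 2 atoms
  obtain ⟨s₁, hs₁a, hs₁p, hs₁c⟩ := exists_atoms hsp hh₁m
  obtain ⟨s₂, hs₂a, hs₂p, hs₂c⟩ := exists_atoms hsp hh₂m
  have hc₁ : Multiset.card s₁ < Mf :=
    short_of_not_fdvd hMf hh₁nf (fun v hv => atom_mem (hs₁a v hv)) hs₁p
  have hc₂ : Multiset.card s₂ < Mf :=
    short_of_not_fdvd hMf hh₂nf (fun v hv => atom_mem (hs₂a v hv)) hs₂p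
  set s := s₁ + s₂ with hsdef
  have hsa : ∀ x ∈ s, IsHAtom H x := by
    intro x hx
    rcases Multiset.mem_add.1 hx with h | h
    · exact hs₁a x h
    · exact hs₂a x h
  have hsprod : s.prod = f ^ D := by
    rw [hsdef, Multiset.prod_add, hs₁p, hs₂p, hfD]
  set t := Multiset.card s with htdef
  have ht2 : 2 * t + 1 ≤ D := by
    have : t = Multiset.card s₁ + Multiset.card s₂ := by rw [htdef, hsdef, Multiset.card_add]
    omega
  -- the extracted exponents
  set Sig : ℕ → ℕ := fun k => (s.map (fun w => fval H f w k)).sum with hSigdef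
  have hSig_le : ∀ k, Sig k ≤ 2 * k * t := by
    intro k
    have h1 : (s.map (fun w => fval H f w k)).sum ≤ (s.map (fun _ => 2 * k)).sum := by
      apply Multiset.sum_map_le_sum_map
      intro w hw
      exact fval_le_atom hsp hf hcond (hsa w hw) k
    have h2 : (s.map (fun _ : G => 2 * k)).sum = t * (2 * k) := by
      rw [Multiset.map_const', Multiset.sum_replicate, smul_eq_mul]
    rw [hSigdef]
    calc (s.map (fun w => fval H f w k)).sum ≤ t * (2 * k) := by rw [← h2]; exact h1
      _ = 2 * k * t := by ring
  have hSig_mono : ∀ k, Sig k ≤ Sig (k + 1) := by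
    intro k
    apply Multiset.sum_map_le_sum_map
    intro w hw
    exact fval_mono hsp hf (atom_mem (hsa w hw)) k
  have hSig_Dk : ∀ k, Sig k ≤ D * k := by
    intro k
    calc Sig k ≤ 2 * k * t := hSig_le k
      _ = (2 * t) * k := by ring
      _ ≤ D * k := Nat.mul_le_mul_right _ (by omega)
  set E : ℕ → ℕ := fun k => D * k - Sig k with hEdef
  have hEk : ∀ k, k ≤ E k := by
    intro k
    have h1 : Sig k ≤ (D - 1) * k := by
      calc Sig k ≤ (2 * t) * k := by
            calc Sig k ≤ 2 * k * t := hSig_le k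
              _ = (2 * t) * k := by ring
        _ ≤ (D - 1) * k := Nat.mul_le_mul_right _ (by omega)
    have h2 : (D - 1) * k + k = D * k := by
      have : D - 1 + 1 = D := by omega
      calc (D - 1) * k + k = (D - 1 + 1) * k := by ring
        _ = D * k := by rw [this]
    simp only [hEdef]
    omega
  have hEgap : ∀ k, E (k + 1) ≤ E k + D := by
    intro k
    have h1 := hSig_mono k
    have h2 := hSig_Dk k
    have h3 : D * (k + 1) = D * k + D := by ring
    simp only [hEdef]
    omega
  -- lengths of `f^(E k)` are uniformly bounded
  have hlen : ∀ k, ∃ ℓ ∈ lengthSet H (f ^ (E k)), ℓ ≤ t * (Mf - 1) := by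
    intro k
    obtain ⟨W, η, hWa, hηu, hWprod, hWcard⟩ := extract hsp hf hMf s hsa k
    have hleft : (s.map (fun w => w ^ k)).prod = f ^ (D * k) := by
      have h1 : (s.map (fun w => w ^ k)).prod = (s.map id).prod ^ k := by
        exact Multiset.prod_map_pow
      rw [Multiset.map_id] at h1
      rw [h1, hsprod, ← pow_mul]
    have hsplit : D * k = Sig k + E k := by
      have := hSig_Dk k
      simp only [hEdef]
      omega
    have hEq : f ^ (E k) = W.prod * η := by
      have h1 : f ^ (Sig k) * (W.prod * η) = f ^ (Sig k) * f ^ (E k) := by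
        rw [← hWprod, hleft, ← pow_add, ← hsplit]
      exact (mul_left_cancel h1).symm
    refine ⟨Multiset.card W, ⟨W, rfl, hWa, ?_⟩, hWcard⟩
    show IsHUnit H (f ^ (E k) / W.prod)
    have : f ^ (E k) / W.prod = η := by
      rw [hEq]
      simp
    rwa [this]
  -- bump lemma: adding f-factors increases length by at most Mf each
  obtain ⟨sf, hsfa, hsfp, hsfc⟩ := exists_atoms hsp hf
  have hsfcard : Multiset.card sf ≤ Mf := card_le_of_dvdAll hMf
    (fun v hv => atom_mem (hsfa v hv)) hsfp
  have hbump : ∀ (E₀ ℓ₀ : ℕ), ℓ₀ ∈ lengthSet H (f ^ E₀) → ∀ δ : ℕ,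
      ∃ ℓ ∈ lengthSet H (f ^ (E₀ + δ)), ℓ ≤ ℓ₀ + δ * Mf := by
    intro E₀ ℓ₀ h₀ δ
    induction δ with
    | zero => exact ⟨ℓ₀, by simpa using h₀, by omega⟩
    | succ d ih =>
      obtain ⟨ℓ, hℓmem, hℓle⟩ := ih
      refine ⟨ℓ + Multiset.card sf, ?_, ?_⟩
      · have := mem_lengthSet_mul hℓmem (mem_lengthSet_exact hsfa hsfp)
        have hpow : f ^ (E₀ + d) * f = f ^ (E₀ + (d + 1)) := by
          rw [← pow_succ, add_assoc]
        rwa [hpow] at this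
      · have : d * Mf + Mf = (d + 1) * Mf := by ring
        omega
  -- final contradiction with STEP A
  obtain ⟨T, hT⟩ := exists_tall_fpow hsp hL hf hMf hMf0 (t * (Mf - 1) + D * Mf + 1)
  have hfinal : ∃ ℓ ∈ lengthSet H (f ^ T), ℓ ≤ t * (Mf - 1) + D * Mf := by
    by_cases hcase : T < E 1
    · have hE1 : E 1 ≤ D := by
        simp only [hEdef]
        omega
      have h0 : (0 : ℕ) ∈ lengthSet H (f ^ 0) := by
        apply zero_mem_lengthSet
        rw [pow_zero]
        exact hunit_one
      obtain ⟨ℓ, hℓmem, hℓle⟩ := hbump 0 0 h0 T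
      refine ⟨ℓ, by simpa using hℓmem, ?_⟩
      have : T ≤ D := by omega
      have : T * Mf ≤ D * Mf := Nat.mul_le_mul_right _ this
      omega
    · push_neg at hcase
      set A : Set ℕ := {k | 1 ≤ k ∧ E k ≤ T} with hAdef
      have hA1 : 1 ∈ A := ⟨le_refl 1, hcase⟩
      have hAbdd : BddAbove A := ⟨T, fun k hk => le_trans (hEk k) hk.2⟩
      have hkm : sSup A ∈ A := Nat.sSup_mem ⟨1, hA1⟩ hAbdd
      set km := sSup A with hkmdef
      have hnot : ¬ (E (km + 1) ≤ T) := by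
        intro hle
        have : km + 1 ∈ A := ⟨by omega, hle⟩
        have := le_csSup hAbdd this
        omega
      push_neg at hnot
      have hδ : T - E km ≤ D := by
        have := hEgap km
        omega
      obtain ⟨ℓ₀, hℓ₀mem, hℓ₀le⟩ := hlen km
      obtain ⟨ℓ, hℓmem, hℓle⟩ := hbump (E km) ℓ₀ hℓ₀mem (T - E km)
      have hTeq : E km + (T - E km) = T := by
        have := hkm.2
        omega
      rw [hTeq] at hℓmem
      refine ⟨ℓ, hℓmem, ?_⟩
      have : (T - E km) * Mf ≤ D * Mf := Nat.mul_le_mul_right _ hδ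
      omega
  obtain ⟨ℓ, hℓmem, hℓle⟩ := hfinal
  have := hT ℓ hℓmem
  omega

end SP6

namespace SP6

variable {G : Type*} [CommGroup G] {H : Submonoid G}

lemma dvdAll_atom (hsp : IsStronglyPrimary H) (hL : Lambda H (H : Set G) = ⊤)
    {f : G} (hf : f ∈ nonUnits H) (hcond : ∀ x ∈ hatH H, f * x ∈ H)
    {Mf : ℕ} (hMf : DvdAll H f Mf) (hMf0 : 0 < Mf)
    {u : G} (hu : IsHAtom H u) : DvdAll H u (3 * Mf) := by
  obtain ⟨h, hhH, hh⟩ := atom_dvd_f3 hsp hL hf hcond hMf hMf0 hu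
  have hf3 : DvdAll H (f ^ 3) (3 * Mf) := dvdAll_pow hMf 3
  intro s hs hcard
  obtain ⟨w, hwH, hw⟩ := hf3 s hs hcard
  exact ⟨h * w, H.mul_mem hhH hwH, by rw [hw, hh, mul_assoc, mul_comm h w, ← mul_assoc]⟩

lemma dvdAll_prod (K : ℕ) :
    ∀ t : Multiset G, (∀ x ∈ t, DvdAll H x K) →
      DvdAll H t.prod (Multiset.card t * K) := by
  intro t
  induction t using Multiset.induction_on with
  | empty => intro _; simpa using dvdAll_one
  | cons a t' ih =>
    intro h
    have h1 := dvdAll_mul (h a (Multiset.mem_cons_self a t'))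
      (ih (fun x hx => h x (Multiset.mem_cons_of_mem hx)))
    rw [Multiset.prod_cons, Multiset.card_cons] at *
    have harith : K + Multiset.card t' * K = (Multiset.card t' + 1) * K := by ring
    rwa [harith] at h1

lemma hassoc_refl (a : G) : HAssoc H a a := by
  show IsHUnit H (a / a)
  rw [div_self']
  exact hunit_one

lemma rel_hassoc_refl (s : Multiset G) : Multiset.Rel (HAssoc H) s s := by
  induction s using Multiset.induction_on with
  | empty => exact Multiset.Rel.zero
  | cons a t ih => exact Multiset.Rel.cons (hassoc_refl a) ih

lemma fdist_le {z z' x v w : Multiset G} (hz : z = x + v) (hz' : z' = x + w) {N : ℕ}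
    (hc : max (Multiset.card v) (Multiset.card w) ≤ N) : fdist H z z' ≤ N :=
  Nat.sInf_le ⟨x, x, v, w, hz, hz', rel_hassoc_refl x, hc⟩

lemma atom_mul_unit {u ε : G} (hu : IsHAtom H u) (hε : IsHUnit H ε) : IsHAtom H (u * ε) := by
  have := hunit_mul_atom hε hu
  rwa [mul_comm] at this

end SP6

/-- If `H` is a strongly primary monoid with `Λ(H) = ∞` and nonempty
conductor `(H : Ĥ)`, then `H` is globally tame. -/
theorem stmt6 {G : Type*} [CommGroup G] (H : Submonoid G) (hq : IsQuotientGroup H)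
    (hsp : IsStronglyPrimary H) (hL : Lambda H (H : Set G) = ⊤)
    (hf : (conductorH H).Nonempty) :
    GloballyTame H := by
  classical
  obtain ⟨f₀, hf₀⟩ := hf
  obtain ⟨a₀, ha₀⟩ := hsp.1
  have h1hat : (1 : G) ∈ hatH H := ⟨1, H.one_mem, fun n => by simpa using H.one_mem⟩
  have hf₀H : f₀ ∈ H := by simpa using hf₀ 1 h1hat
  set f := a₀ * f₀ with hfdef
  have hfm : f ∈ nonUnits H := SP6.nu_mul_mem ha₀ hf₀H
  have hcond : ∀ x ∈ hatH H, f * x ∈ H := by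
    intro x hx
    rw [hfdef, mul_assoc]
    exact H.mul_mem ha₀.1 (hf₀ x hx)
  obtain ⟨Mf, hMf0, hMf⟩ := SP6.dvdAll_of_sp hsp hfm
  refine ⟨3 * Mf * (3 * Mf), fun u hu => ?_⟩
  have hDu : SP6.DvdAll H u (3 * Mf) := SP6.dvdAll_atom hsp hL hfm hcond hMf hMf0 hu
  intro a haH habx z hz
  obtain ⟨b, hbH, hab⟩ := habx
  obtain ⟨hza, hzassoc⟩ := hz
  have hum : u ∈ nonUnits H := SP6.atom_mem hu
  by_cases hcase : 3 * Mf ≤ Multiset.card z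
  · -- long factorization: replace the first 3Mf atoms
    obtain ⟨tz, r, hzsplit, htzc⟩ := SP6.exists_split (3 * Mf) z hcase
    have htz_atom : ∀ x ∈ tz, IsHAtom H x := fun x hx => hza x (by
      rw [hzsplit]; exact Multiset.mem_add.2 (Or.inl hx))
    have hr_atom : ∀ x ∈ r, IsHAtom H x := fun x hx => hza x (by
      rw [hzsplit]; exact Multiset.mem_add.2 (Or.inr hx))
    obtain ⟨c, hcH, hc⟩ := hDu tz (fun x hx => SP6.atom_mem (htz_atom x hx)) (le_of_eq htzc.symm)
    by_cases hcu : IsHUnit H c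
    · refine ⟨(u * c) ::ₘ r, ⟨?_, ?_⟩, ⟨u * c, Multiset.mem_cons_self _ _, ?_⟩, ?_⟩
      · intro v hv
        rcases Multiset.mem_cons.1 hv with h | h
        · rw [h]; exact SP6.atom_mul_unit hu hcu
        · exact hr_atom v h
      · show IsHUnit H (a / ((u * c) ::ₘ r).prod)
        have : ((u * c) ::ₘ r).prod = z.prod := by
          rw [Multiset.prod_cons, ← hc, hzsplit, Multiset.prod_add]
        rw [this]
        exact hzassoc
      · show IsHUnit H ((u * c) / u)
        have : u * c / u = c := by
          rw [mul_comm, mul_div_assoc, div_self', mul_one]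
        rw [this]
        exact hcu
      · apply SP6.fdist_le (x := r) (v := tz) (w := {u * c})
        · rw [hzsplit, add_comm]
        · rw [add_comm, Multiset.singleton_add]
        · have h1 : Multiset.card tz ≤ 3 * Mf * (3 * Mf) := by
            rw [htzc]; nlinarith
          have h2 : Multiset.card ({u * c} : Multiset G) ≤ 3 * Mf * (3 * Mf) := by
            simp; nlinarith
          exact max_le h1 h2
    · have hcm : c ∈ nonUnits H := SP6.mem_nonUnits hcH hcu
      obtain ⟨sc, hsca, hscp, hscc⟩ := SP6.exists_atoms hsp hcm
      have hDtz : SP6.DvdAll H tz.prod (3 * Mf * (3 * Mf)) := by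
        have h1 := SP6.dvdAll_prod (3 * Mf) tz (fun x hx =>
          SP6.dvdAll_atom hsp hL hfm hcond hMf hMf0 (htz_atom x hx))
        rwa [htzc] at h1
      have hbound : 1 + Multiset.card sc ≤ 3 * Mf * (3 * Mf) := by
        have h1 := SP6.card_le_of_dvdAll hDtz (s := u ::ₘ sc) (fun x hx => by
          rcases Multiset.mem_cons.1 hx with h | h
          · rw [h]; exact hum
          · exact SP6.atom_mem (hsca x h))
          (by rw [Multiset.prod_cons, hscp, ← hc])
        simpa [Nat.add_comm] using h1
      refine ⟨u ::ₘ (sc + r), ⟨?_, ?_⟩, ⟨u, Multiset.mem_cons_self _ _, SP6.hassoc_refl u⟩, ?_⟩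
      · intro v hv
        rcases Multiset.mem_cons.1 hv with h | h
        · rw [h]; exact hu
        · rcases Multiset.mem_add.1 h with h' | h'
          · exact hsca v h'
          · exact hr_atom v h'
      · show IsHUnit H (a / (u ::ₘ (sc + r)).prod)
        have : (u ::ₘ (sc + r)).prod = z.prod := by
          rw [Multiset.prod_cons, Multiset.prod_add, hscp, ← mul_assoc, ← hc, hzsplit,
            Multiset.prod_add]
        rw [this]
        exact hzassoc
      · apply SP6.fdist_le (x := r) (v := tz) (w := u ::ₘ sc)
        · rw [hzsplit, add_comm]
        · rw [← Multiset.cons_add, add_comm]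
        · have h1 : Multiset.card tz ≤ 3 * Mf * (3 * Mf) := by
            rw [htzc]; nlinarith
          have h2 : Multiset.card (u ::ₘ sc) ≤ 3 * Mf * (3 * Mf) := by
            rw [Multiset.card_cons]; omega
          exact max_le h1 h2
  · -- short factorization: use any factorization through u
    push_neg at hcase
    by_cases hbu : IsHUnit H b
    · refine ⟨{u * b}, ⟨?_, ?_⟩, ⟨u * b, Multiset.mem_singleton_self _, ?_⟩, ?_⟩
      · intro v hv
        rw [Multiset.mem_singleton.1 hv]
        exact SP6.atom_mul_unit hu hbu
      · show IsHUnit H (a / ({u * b} : Multiset G).prod)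
        rw [Multiset.prod_singleton, ← hab, div_self']
        exact SP6.hunit_one
      · show IsHUnit H ((u * b) / u)
        have : u * b / u = b := by
          rw [mul_comm, mul_div_assoc, div_self', mul_one]
        rw [this]
        exact hbu
      · apply SP6.fdist_le (x := 0) (v := z) (w := {u * b})
        · simp
        · simp
        · have h2 : Multiset.card ({u * b} : Multiset G) = 1 := by simp
          have h3 : Multiset.card z ≤ 3 * Mf * (3 * Mf) := by nlinarith
          rw [h2]
          refine max_le h3 (by nlinarith)
    · have hbm : b ∈ nonUnits H := SP6.mem_nonUnits hbH hbu
      obtain ⟨sb, hsba, hsbp, hsbc⟩ := SP6.exists_atoms hsp hbm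
      have hDz : SP6.DvdAll H z.prod (Multiset.card z * (3 * Mf)) :=
        SP6.dvdAll_prod (3 * Mf) z (fun x hx =>
          SP6.dvdAll_atom hsp hL hfm hcond hMf hMf0 (hza x hx))
      have hDa : SP6.DvdAll H a (Multiset.card z * (3 * Mf)) :=
        SP6.dvdAll_congr hDz hzassoc
      have hbound : 1 + Multiset.card sb ≤ Multiset.card z * (3 * Mf) := by
        have h1 := SP6.card_le_of_dvdAll hDa (s := u ::ₘ sb) (fun x hx => by
          rcases Multiset.mem_cons.1 hx with h | h
          · rw [h]; exact hum
          · exact SP6.atom_mem (hsba x h))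
          (by rw [Multiset.prod_cons, hsbp, ← hab])
        simpa [Nat.add_comm] using h1
      refine ⟨u ::ₘ sb, ⟨?_, ?_⟩, ⟨u, Multiset.mem_cons_self _ _, SP6.hassoc_refl u⟩, ?_⟩
      · intro v hv
        rcases Multiset.mem_cons.1 hv with h | h
        · rw [h]; exact hu
        · exact hsba v h
      · show IsHUnit H (a / (u ::ₘ sb).prod)
        rw [Multiset.prod_cons, hsbp, ← hab, div_self']
        exact SP6.hunit_one
      · apply SP6.fdist_le (x := 0) (v := z) (w := u ::ₘ sb)
        · simp
        · simp
        · have h1 : Multiset.card z ≤ 3 * Mf * (3 * Mf) := by nlinarith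
          have h2 : Multiset.card (u ::ₘ sb) ≤ 3 * Mf * (3 * Mf) := by
            rw [Multiset.card_cons]
            have : Multiset.card z * (3 * Mf) ≤ 3 * Mf * (3 * Mf) := by
              apply Nat.mul_le_mul_right
              omega
            omega
          exact max_le h1 h2
end

section
/- Let H be a strongly primary monoid. For every atom u ∈ H, we have ω(u) ≤ M(u), where M(u) is the smallest n ∈ ℕ with mⁿ ⊆ uH; in particular ω(u) < ∞. -/
open Pointwise

private lemma aux_prod_mem_pow_card {G : Type*} [CommGroup G] (S : Set G) :
    ∀ (t : Multiset G), (∀ x ∈ t, x ∈ S) → t.prod ∈ S ^ (Multiset.card t) := by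
  intro t
  induction t using Multiset.induction_on with
  | empty => intro _; simp
  | cons a t ih =>
    intro h
    simp only [Multiset.prod_cons, Multiset.card_cons, pow_succ']
    exact Set.mul_mem_mul (h a (Multiset.mem_cons_self a t))
      (ih fun x hx => h x (Multiset.mem_cons_of_mem hx))

private lemma aux_unit_prod {G : Type*} [CommGroup G] (H : Submonoid G) :
    ∀ (t : Multiset G), (∀ x ∈ t, x ∈ H ∧ x⁻¹ ∈ H) → t.prod ∈ H ∧ (t.prod)⁻¹ ∈ H := by
  intro t
  induction t using Multiset.induction_on with
  | empty => intro _; simp [H.one_mem]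
  | cons a t ih =>
    intro h
    have ha := h a (Multiset.mem_cons_self a t)
    have ht := ih fun x hx => h x (Multiset.mem_cons_of_mem hx)
    refine ⟨?_, ?_⟩
    · simpa [Multiset.prod_cons] using H.mul_mem ha.1 ht.1
    · simpa [Multiset.prod_cons, mul_inv_rev] using H.mul_mem ht.2 ha.2

/-- Let `H` be a strongly primary monoid. For every atom `u ∈ H`
we have `ω(u) ≤ M(u)`; in particular `ω(u) < ∞`. -/
theorem stmt10 {G : Type*} [CommGroup G] (H : Submonoid G) (hq : IsQuotientGroup H)
    (hsp : IsStronglyPrimary H) :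
    ∀ u : G, IsHAtom H u → omegaDeg H u ≤ ((Mdeg H u : ℕ) : ℕ∞) ∧ omegaDeg H u < ⊤ := by
  classical
  intro u hu
  obtain ⟨hne, hsp'⟩ := hsp
  have hun : u ∈ nonUnits H := ⟨hu.1, fun h => hu.2.1 ⟨hu.1, h⟩⟩
  obtain ⟨n, hn, hns⟩ := hsp' u hun
  have hMmem : Mdeg H u ∈ {n : ℕ | 0 < n ∧ nonUnits H ^ n ⊆ u • (H : Set G)} :=
    Nat.sInf_mem ⟨n, hn, hns⟩
  set M := Mdeg H u with hMdef
  obtain ⟨hM0, hMsub⟩ := hMmem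
  have hbound : OmegaBound H u M := by
    rintro s hs ⟨c, hc, hprod⟩
    set ns := s.filter (fun x => x ∈ nonUnits H) with hnsdef
    set us := s.filter (fun x => ¬ x ∈ nonUnits H) with husdef
    have hsplit : ns + us = s := Multiset.filter_add_not _ s
    have hus_units : ∀ x ∈ us, x ∈ H ∧ x⁻¹ ∈ H := by
      intro x hx
      have hx' := Multiset.mem_filter.mp hx
      have hxH : x ∈ H := hs x hx'.1
      refine ⟨hxH, ?_⟩
      by_contra hne'
      exact hx'.2 ⟨hxH, hne'⟩
    obtain ⟨husH, husinv⟩ := aux_unit_prod H us hus_units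
    have hns_non : ∀ x ∈ ns, x ∈ nonUnits H := fun x hx => (Multiset.mem_filter.mp hx).2
    have hprod' : ns.prod * us.prod = u * c := by
      rw [← Multiset.prod_add, hsplit]; exact hprod
    by_cases hcard : Multiset.card ns ≤ M
    · refine ⟨ns, Multiset.filter_le _ s, hcard, c * (us.prod)⁻¹, H.mul_mem hc husinv, ?_⟩
      have : ns.prod = u * c * (us.prod)⁻¹ := by
        rw [← hprod']; group
      rw [this, mul_assoc]
    · push_neg at hcard
      set t : Multiset G := ((ns.toList.take M : List G) : Multiset G) with htdef
      have htle : t ≤ ns := by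
        rw [← Multiset.coe_toList ns]
        exact Multiset.coe_le.mpr (List.take_sublist M ns.toList).subperm
      have htcard : Multiset.card t = M := by
        simp only [htdef, Multiset.coe_card, List.length_take, Multiset.length_toList]
        omega
      have htmem : t.prod ∈ nonUnits H ^ M := by
        rw [← htcard]
        exact aux_prod_mem_pow_card _ t fun x hx => hns_non x (Multiset.mem_of_le htle hx)
      obtain ⟨y, hy, hyeq⟩ := hMsub htmem
      exact ⟨t, le_trans htle (Multiset.filter_le _ s), le_of_eq htcard, y, hy, by
        rw [← hyeq]; simp [smul_eq_mul]⟩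
  have hmem : ((M : ℕ) : ℕ∞) ∈ {N : ℕ∞ | ∃ n : ℕ, OmegaBound H u n ∧ N = (n : ℕ∞)} :=
    ⟨M, hbound, rfl⟩
  have hle : omegaDeg H u ≤ ((M : ℕ) : ℕ∞) := sInf_le hmem
  exact ⟨hle, lt_of_le_of_lt hle (by simp [lt_top_iff_ne_top])⟩
end
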